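/- arXiv:1408.5060 — 3 statements merged into one kernel-verified Lean document; each statement's English description precedes it below -/
import Mathlib

section
/- Let λ > 0 and β, γ > 0. Then S(q_A(t^β), q_B(t^γ)) = t^{−max(β,γ)} θ(t) for t ≥ 1, where θ is slowly varying at infinity. Furthermore θ(t) → χ_λ as t → ∞ if β = γ, and θ(t) → 1 otherwise. -/
open MeasureTheory Filter Set

noncomputable section

/-- A positive function defined near `+∞` is slowly varying at infinity if
`L(at)/L(t) → 1` as `t → ∞` for every `a > 0`. -/
def SlowlyVarying (L : ℝ → ℝ) : Prop :=
  (∀ᶠ t in atTop, 0 < L t) ∧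
    ∀ a : ℝ, 0 < a → Tendsto (fun t => L (a * t) / L t) atTop (nhds 1)

/-- `N` is a norm on `ℝ²`, viewed as a two-argument function. -/
def IsNorm2 (N : ℝ → ℝ → ℝ) : Prop :=
  (∀ x y, 0 ≤ N x y) ∧ (∀ x y, N x y = 0 ↔ x = 0 ∧ y = 0) ∧
    (∀ c x y, N (c * x) (c * y) = |c| * N x y) ∧
    (∀ x₁ y₁ x₂ y₂, N (x₁ + x₂) (y₁ + y₂) ≤ N x₁ y₁ + N x₂ y₂)

/-- Condition (C1): symmetry of the norm. -/
def CondC1 (N : ℝ → ℝ → ℝ) : Prop := ∀ x y, N x y = N y x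

/-- Condition (C2): the norm dominates the sup-norm. -/
def CondC2 (N : ℝ → ℝ → ℝ) : Prop := ∀ x y : ℝ, max |x| |y| ≤ N x y

/-- Condition (C3): equality with the sup-norm off the diagonal. -/
def CondC3 (N : ℝ → ℝ → ℝ) : Prop :=
  ∃ x₀ y₀ : ℝ, 0 ≤ x₀ ∧ 0 ≤ y₀ ∧ x₀ ≠ y₀ ∧ N x₀ y₀ = max x₀ y₀

/-- τ(v) = ‖(v, 1−v)‖_m / v.  (At `v = 0` this real-valued version takes the
junk value `0` instead of `+∞`; this is irrelevant for all integrals below,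
which are taken against an atomless measure.) -/
def tau (N : ℝ → ℝ → ℝ) (v : ℝ) : ℝ := N v (1 - v) / v

/-- The probability measure associated with a distribution function `F_V` on
`[0,1]` that is continuous (no atoms) and strictly increasing (positive mass on
every nonempty open subinterval of `[0,1]`): Assumption 1. -/
def GoodMeasure (μ : Measure ℝ) : Prop :=
  μ ((Set.Icc (0:ℝ) 1)ᶜ) = 0 ∧ (∀ x : ℝ, μ {x} = 0) ∧
    ∀ a b : ℝ, 0 ≤ a → a < b → b ≤ 1 → 0 < μ (Set.Ioo a b)

/-- The GP(1,λ) survivor function `(1 + λx)₊^{−1/λ}`, interpreted as `e^{−x}`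
when `λ = 0`. -/
def gpTail (l x : ℝ) : ℝ :=
  if l = 0 then Real.exp (-x) else (max (1 + l * x) 0) ^ (-1 / l)

/-- Marginal survival function `S_A(x) = ∫₀¹ (1 + λ x τ(v))₊^{−1/λ} dF_V(v)`. -/
def survA (N : ℝ → ℝ → ℝ) (μ : Measure ℝ) (l x : ℝ) : ℝ :=
  ∫ v, gpTail l (x * tau N v) ∂μ

/-- Marginal survival function `S_B(y) = ∫₀¹ (1 + λ y τ(1−v))₊^{−1/λ} dF_V(v)`. -/
def survB (N : ℝ → ℝ → ℝ) (μ : Measure ℝ) (l y : ℝ) : ℝ :=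
  ∫ v, gpTail l (y * tau N (1 - v)) ∂μ

/-- Joint survival function
`S(x,y) = ∫₀¹ (1 + λ max{x τ(v), y τ(1−v)})₊^{−1/λ} dF_V(v)`. -/
def survJ (N : ℝ → ℝ → ℝ) (μ : Measure ℝ) (l x y : ℝ) : ℝ :=
  ∫ v, gpTail l (max (x * tau N v) (y * tau N (1 - v))) ∂μ

/-- `μ₁ = λ^{−1/λ} ∫₀¹ τ(v)^{−1/λ} dF_V(v)` (for `λ > 0`). -/
def mu1 (N : ℝ → ℝ → ℝ) (μ : Measure ℝ) (l : ℝ) : ℝ :=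
  l ^ (-1 / l) * ∫ v, tau N v ^ (-1 / l) ∂μ

/-- `μ₂ = λ^{−1/λ} ∫₀¹ τ(1−v)^{−1/λ} dF_V(v)` (for `λ > 0`). -/
def mu2 (N : ℝ → ℝ → ℝ) (μ : Measure ℝ) (l : ℝ) : ℝ :=
  l ^ (-1 / l) * ∫ v, tau N (1 - v) ^ (-1 / l) ∂μ

/-- `χ_λ = λ^{−1/λ} ∫₀¹ min{τ(v)^{−1/λ}/μ₁, τ(1−v)^{−1/λ}/μ₂} dF_V(v)`. -/
def chiLam (N : ℝ → ℝ → ℝ) (μ : Measure ℝ) (l : ℝ) : ℝ :=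
  l ^ (-1 / l) *
    ∫ v, min (tau N v ^ (-1 / l) / mu1 N μ l)
             (tau N (1 - v) ^ (-1 / l) / mu2 N μ l) ∂μ

section Auxiliary

open Real

lemma myMeasurable_rpow_const (c : ℝ) : Measurable fun x : ℝ => x ^ c := by
  have h : (fun x : ℝ => x ^ c) = fun x =>
      if x < 0 then Real.exp (Real.log x * c) * Real.cos (c * Real.pi)
      else if x = 0 then (if c = 0 then 1 else 0)
      else Real.exp (Real.log x * c) := by
    funext x
    rcases lt_trichotomy x 0 with h | h | h
    · rw [if_pos h, Real.rpow_def_of_neg h, mul_comm c]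
    · subst h
      rw [if_neg (lt_irrefl _), if_pos rfl]
      split_ifs with hc
      · subst hc; exact Real.rpow_zero 0
      · exact Real.zero_rpow hc
    · rw [if_neg (not_lt.2 h.le), if_neg h.ne', Real.rpow_def_of_pos h]
  rw [h]
  refine Measurable.ite (measurableSet_lt measurable_id measurable_const)
    ((Real.measurable_exp.comp (Real.measurable_log.mul measurable_const)).mul
      measurable_const) ?_
  refine Measurable.ite ?_ measurable_const
    (Real.measurable_exp.comp (Real.measurable_log.mul measurable_const))
  exact MeasurableSet.congr (MeasurableSet.singleton 0) (by ext x; simp [eq_comm])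

lemma gpTail_eq {l : ℝ} (hl : 0 < l) {x : ℝ} (hx : 0 ≤ x) :
    gpTail l x = (1 + l * x) ^ (-1 / l) := by
  have h1 : (0:ℝ) ≤ 1 + l * x := by nlinarith
  rw [gpTail, if_neg hl.ne', max_eq_left h1]

lemma gpTail_nonneg (l x : ℝ) : 0 ≤ gpTail l x := by
  rw [gpTail]
  split_ifs
  · exact (Real.exp_pos _).le
  · exact Real.rpow_nonneg (le_max_right _ _) _

lemma gpTail_pos {l : ℝ} (hl : 0 < l) {x : ℝ} (hx : 0 ≤ x) : 0 < gpTail l x := by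
  rw [gpTail_eq hl hx]
  exact Real.rpow_pos_of_pos (by nlinarith) _

lemma gpTail_le_one {l : ℝ} (hl : 0 < l) {x : ℝ} (hx : 0 ≤ x) : gpTail l x ≤ 1 := by
  rw [gpTail_eq hl hx]
  exact Real.rpow_le_one_of_one_le_of_nonpos (by nlinarith) (by
    rw [neg_div]
    exact neg_nonpos.2 (by positivity))

lemma gpTail_le {l : ℝ} (hl : 0 < l) {a b : ℝ} (ha : 0 ≤ a) (hab : a ≤ b) :
    gpTail l b ≤ gpTail l a := by
  rw [gpTail_eq hl ha, gpTail_eq hl (ha.trans hab)]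
  exact Real.rpow_le_rpow_of_nonpos (by nlinarith) (by nlinarith)
    (by rw [neg_div]; exact neg_nonpos.2 (by positivity))

lemma gpTail_max {l : ℝ} (hl : 0 < l) {a b : ℝ} (ha : 0 ≤ a) (hb : 0 ≤ b) :
    gpTail l (max a b) = min (gpTail l a) (gpTail l b) := by
  rcases le_total a b with h | h
  · rw [max_eq_right h, min_eq_right (gpTail_le hl ha h)]
  · rw [max_eq_left h, min_eq_left (gpTail_le hl hb h)]

lemma gpTail_measurable (l : ℝ) : Measurable (gpTail l) := by
  by_cases hl : l = 0
  · have h : gpTail l = fun x => Real.exp (-x) := by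
      funext x; rw [gpTail, if_pos hl]
    rw [h]
    exact Real.measurable_exp.comp measurable_neg
  · have h : gpTail l = fun x => (max (1 + l * x) 0) ^ (-1 / l) := by
      funext x; rw [gpTail, if_neg hl]
    rw [h]
    exact (myMeasurable_rpow_const _).comp
      ((measurable_const.add (measurable_id.const_mul l)).max measurable_const)

lemma mul_min_nonneg {a b c : ℝ} (ha : 0 ≤ a) : a * min b c = min (a * b) (a * c) := by
  rcases le_total b c with h | h
  · rw [min_eq_left h, min_eq_left (by nlinarith)]
  · rw [min_eq_right h, min_eq_right (by nlinarith)]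

lemma tendsto_min_atTop_nhds {α : Type*} {L : Filter α} {f g : α → ℝ} {a : ℝ}
    (hf : Tendsto f L atTop) (hg : Tendsto g L (nhds a)) :
    Tendsto (fun t => min (f t) (g t)) L (nhds a) := by
  refine Tendsto.congr' ?_ hg
  filter_upwards [hf.eventually_ge_atTop (a + 1), hg.eventually_le_const (lt_add_one a)]
    with t h1 h2
  rw [min_eq_right (h2.trans h1)]

end Auxiliary

section Aux2

open Real

variable {N : ℝ → ℝ → ℝ}

lemma N_x_zero (hN : IsNorm2 N) (c : ℝ) : N c 0 = |c| * N 1 0 := by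
  have := hN.2.2.1 c 1 0
  simpa using this

lemma N_zero_x (hN : IsNorm2 N) (c : ℝ) : N 0 c = |c| * N 0 1 := by
  have := hN.2.2.1 c 0 1
  simpa using this

lemma N_le_abs (hN : IsNorm2 N) (x y : ℝ) : N x y ≤ |x| * N 1 0 + |y| * N 0 1 := by
  have h := hN.2.2.2 x 0 0 y
  rw [add_zero, zero_add] at h
  rw [N_x_zero hN x, N_zero_x hN y] at h
  exact h

lemma N_continuous (hN : IsNorm2 N) : Continuous fun v : ℝ => N v (1 - v) := by
  have hK0 : 0 ≤ N 1 0 + N 0 1 := add_nonneg (hN.1 1 0) (hN.1 0 1)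
  refine (LipschitzWith.of_dist_le_mul (K := Real.toNNReal (N 1 0 + N 0 1)) ?_).continuous
  intro a b
  rw [Real.dist_eq, Real.dist_eq, Real.coe_toNNReal _ hK0]
  have key : ∀ p q : ℝ, N p (1 - p) - N q (1 - q) ≤ (N 1 0 + N 0 1) * |p - q| := by
    intro p q
    have h1 : N p (1 - p) ≤ N q (1 - q) + N (p - q) (q - p) := by
      have h := hN.2.2.2 q (1 - q) (p - q) (q - p)
      have e1 : q + (p - q) = p := by ring
      have e2 : 1 - q + (q - p) = 1 - p := by ring
      rwa [e1, e2] at h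
    have h2 : N (p - q) (q - p) ≤ |p - q| * N 1 0 + |q - p| * N 0 1 := N_le_abs hN _ _
    rw [abs_sub_comm q p] at h2
    nlinarith [abs_nonneg (p - q)]
  rw [abs_sub_le_iff]
  constructor
  · have := key a b; linarith
  · have := key b a; rw [abs_sub_comm b a] at this; linarith

lemma tau_measurable (hN : IsNorm2 N) : Measurable (tau N) := by
  have h : tau N = fun v => N v (1 - v) / v := rfl
  rw [h]
  exact (N_continuous hN).measurable.div measurable_id

lemma tau_nonneg (hN : IsNorm2 N) {v : ℝ} (h0 : 0 ≤ v) : 0 ≤ tau N v :=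
  div_nonneg (hN.1 _ _) h0

lemma tau_ge_one (hC2 : CondC2 N) {v : ℝ} (h0 : 0 < v) (h1 : v ≤ 1) : 1 ≤ tau N v := by
  rw [tau, le_div_iff₀ h0, one_mul]
  calc v = |v| := (abs_of_pos h0).symm
  _ ≤ max |v| |1 - v| := le_max_left _ _
  _ ≤ N v (1 - v) := hC2 v (1 - v)

lemma tau_le_C (hN : IsNorm2 N) {v : ℝ} (h3 : 1/3 ≤ v) (h1 : v ≤ 1) :
    tau N v ≤ 3 * (N 1 0 + N 0 1) := by
  have hv : 0 < v := lt_of_lt_of_le (by norm_num) h3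
  have h10 : 0 ≤ N 1 0 := hN.1 1 0
  have h01 : 0 ≤ N 0 1 := hN.1 0 1
  rw [tau, div_le_iff₀ hv]
  have hb := N_le_abs hN v (1 - v)
  rw [abs_of_pos hv, abs_of_nonneg (by linarith : (0:ℝ) ≤ 1 - v)] at hb
  nlinarith

end Aux2

section Aux3

open Real

lemma integral_pos_aux (μ : Measure ℝ) [IsProbabilityMeasure μ] {f : ℝ → ℝ}
    (hint : Integrable f μ) (h0 : 0 ≤ᵐ[μ] f) {s : Set ℝ} (hs : MeasurableSet s)
    (hms : 0 < μ s) {c : ℝ} (hc : 0 < c) (hfc : ∀ᵐ v ∂μ, v ∈ s → c ≤ f v) :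
    0 < ∫ v, f v ∂μ := by
  have h1 : ∫ _ in s, c ∂μ ≤ ∫ v in s, f v ∂μ := by
    refine setIntegral_mono_ae_restrict ?_ hint.integrableOn
      ((ae_restrict_iff' hs).2 hfc)
    exact integrableOn_const (measure_ne_top μ s)
  rw [setIntegral_const, smul_eq_mul, measureReal_def] at h1
  have h2 := setIntegral_le_integral hint h0 (s := s)
  have h3 : 0 < (μ s).toReal * c :=
    mul_pos (ENNReal.toReal_pos hms.ne' (measure_ne_top μ s)) hc
  linarith

lemma gpTail_integrable (μ : Measure ℝ) [IsProbabilityMeasure μ] {l : ℝ} (hl : 0 < l)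
    {w : ℝ → ℝ} (hwm : Measurable w) (hw : ∀ᵐ v ∂μ, 0 ≤ w v) {x : ℝ} (hx : 0 ≤ x) :
    Integrable (fun v => gpTail l (x * w v)) μ := by
  refine Integrable.mono' (integrable_const 1)
    ((gpTail_measurable l).comp (hwm.const_mul x)).aestronglyMeasurable ?_
  filter_upwards [hw] with v hv
  rw [Real.norm_eq_abs, abs_of_nonneg (gpTail_nonneg _ _)]
  exact gpTail_le_one hl (mul_nonneg hx hv)

lemma marginal_asymp (μ : Measure ℝ) [IsProbabilityMeasure μ]
    {l : ℝ} (hl : 0 < l) {w : ℝ → ℝ} (hwm : Measurable w)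
    (hw1 : ∀ᵐ v ∂μ, 1 ≤ w v) {C : ℝ} (hC : 1 ≤ C)
    (hwC : ∀ᵐ v ∂μ, v ∈ Set.Ioo (1/3:ℝ) (2/3) → w v ≤ C)
    (hm : 0 < μ (Set.Ioo (1/3:ℝ) (2/3))) :
    0 < ∫ v, w v ^ (-1/l) ∂μ ∧
      Tendsto (fun x : ℝ => x ^ (1/l) * ∫ v, gpTail l (x * w v) ∂μ) atTop
        (nhds (l ^ (-1/l) * ∫ v, w v ^ (-1/l) ∂μ)) := by
  have hle : (-1 : ℝ)/l ≤ 0 := by rw [neg_div]; exact neg_nonpos.2 (by positivity)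
  have hw0 : ∀ᵐ v ∂μ, 0 ≤ w v := hw1.mono fun v h => zero_le_one.trans h
  have hmeas : Measurable fun v => w v ^ (-1/l) := (myMeasurable_rpow_const _).comp hwm
  have hint : Integrable (fun v => w v ^ (-1/l)) μ := by
    refine Integrable.mono' (integrable_const 1) hmeas.aestronglyMeasurable ?_
    filter_upwards [hw1] with v hv
    rw [Real.norm_eq_abs, abs_of_nonneg (Real.rpow_nonneg (by linarith) _)]
    exact Real.rpow_le_one_of_one_le_of_nonpos hv hle
  constructor
  · refine integral_pos_aux μ hint ?_ measurableSet_Ioo hm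
      (c := C ^ (-1/l)) (Real.rpow_pos_of_pos (by linarith) _) ?_
    · filter_upwards [hw0] with v hv using Real.rpow_nonneg hv _
    · filter_upwards [hwC, hw1] with v hvC hv1
      intro hvs
      exact Real.rpow_le_rpow_of_nonpos (by linarith) (hvC hvs) hle
  · have key : Tendsto (fun x : ℝ => ∫ v, (x⁻¹ + l * w v) ^ (-1/l) ∂μ) atTop
        (nhds (∫ v, (l * w v) ^ (-1/l) ∂μ)) := by
      refine tendsto_integral_filter_of_dominated_convergence (fun _ => l ^ (-1/l))
        ?_ ?_ (integrable_const _) ?_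
      · filter_upwards with x
        exact ((myMeasurable_rpow_const _).comp
          (measurable_const.add (hwm.const_mul l))).aestronglyMeasurable
      · filter_upwards [eventually_ge_atTop (1:ℝ)] with x hx
        filter_upwards [hw1] with v hv
        have h1 : (0:ℝ) < l * w v := by nlinarith
        have h2 : (0:ℝ) ≤ x⁻¹ := by positivity
        rw [Real.norm_eq_abs, abs_of_nonneg (Real.rpow_nonneg (by linarith) _)]
        calc (x⁻¹ + l * w v) ^ (-1/l)
            ≤ (l * w v) ^ (-1/l) :=
              Real.rpow_le_rpow_of_nonpos h1 (by linarith) hle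
          _ ≤ (l * 1) ^ (-1/l) :=
              Real.rpow_le_rpow_of_nonpos (by nlinarith) (by nlinarith) hle
          _ = l ^ (-1/l) := by rw [mul_one]
      · filter_upwards [hw1] with v hv
        have h1 : (0:ℝ) < l * w v := by nlinarith
        have h2 : Tendsto (fun x : ℝ => x⁻¹ + l * w v) atTop (nhds (0 + l * w v)) :=
          tendsto_inv_atTop_zero.add tendsto_const_nhds
        rw [zero_add] at h2
        exact h2.rpow_const (Or.inl h1.ne')
    have hval : ∫ v, (l * w v) ^ (-1/l) ∂μ = l ^ (-1/l) * ∫ v, w v ^ (-1/l) ∂μ := by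
      rw [← integral_const_mul]
      refine integral_congr_ae ?_
      filter_upwards [hw0] with v hv
      rw [Real.mul_rpow hl.le hv]
    rw [hval] at key
    have heq : ∀ᶠ x : ℝ in atTop,
        (fun x : ℝ => ∫ v, (x⁻¹ + l * w v) ^ (-1/l) ∂μ) x
          = (fun x : ℝ => x ^ (1/l) * ∫ v, gpTail l (x * w v) ∂μ) x := by
      filter_upwards [eventually_ge_atTop (1:ℝ)] with x hx
      have hx0 : (0:ℝ) < x := by linarith
      show _ = x ^ (1/l) * ∫ v, gpTail l (x * w v) ∂μ
      rw [← integral_const_mul]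
      refine integral_congr_ae ?_
      filter_upwards [hw1] with v hv
      have harg : 0 ≤ x * w v := by nlinarith
      rw [gpTail_eq hl harg]
      have h1 : (x⁻¹) ^ (-1/l) = x ^ (1/l) := by
        rw [← Real.rpow_neg_one x, ← Real.rpow_mul hx0.le]
        congr 1
        ring
      calc (x⁻¹ + l * w v) ^ (-1/l)
          = (x⁻¹ * (1 + l * (x * w v))) ^ (-1/l) := by
            rw [show x⁻¹ * (1 + l * (x * w v)) = x⁻¹ + l * w v by
              field_simp]
        _ = (x⁻¹) ^ (-1/l) * (1 + l * (x * w v)) ^ (-1/l) :=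
            Real.mul_rpow (by positivity) (by nlinarith)
        _ = x ^ (1/l) * (1 + l * (x * w v)) ^ (-1/l) := by rw [h1]
    exact Tendsto.congr' heq key

lemma q_asymp (μ : Measure ℝ) [IsProbabilityMeasure μ]
    {l : ℝ} (hl : 0 < l) {w : ℝ → ℝ} (hwm : Measurable w)
    (hw1 : ∀ᵐ v ∂μ, 1 ≤ w v) {C : ℝ} (hC : 1 ≤ C)
    (hwC : ∀ᵐ v ∂μ, v ∈ Set.Ioo (1/3:ℝ) (2/3) → w v ≤ C)
    (hm : 0 < μ (Set.Ioo (1/3:ℝ) (2/3)))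
    {Q : ℝ → ℝ} (hQ : ∀ s : ℝ, 1 ≤ s → 0 ≤ Q s ∧ ∫ v, gpTail l (Q s * w v) ∂μ = 1/s) :
    Tendsto Q atTop atTop ∧
      Tendsto (fun s => Q s ^ (1/l) / s) atTop
        (nhds (l ^ (-1/l) * ∫ v, w v ^ (-1/l) ∂μ)) := by
  have hw0 : ∀ᵐ v ∂μ, 0 ≤ w v := hw1.mono fun v h => zero_le_one.trans h
  have hQtop : Tendsto Q atTop atTop := by
    rw [tendsto_atTop]
    intro M
    set M' : ℝ := max M 0 with hM'
    have hM'0 : 0 ≤ M' := le_max_right _ _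
    set ε : ℝ := gpTail l (C * M') * (μ (Set.Ioo (1/3:ℝ) (2/3))).toReal with hε'
    have hε : 0 < ε :=
      mul_pos (gpTail_pos hl (by positivity))
        (ENNReal.toReal_pos hm.ne' (measure_ne_top μ _))
    filter_upwards [eventually_ge_atTop (max 1 (2/ε))] with s hs
    have hs1 : (1:ℝ) ≤ s := le_trans (le_max_left _ _) hs
    obtain ⟨hQ0, hQeq⟩ := hQ s hs1
    by_contra hcon
    push_neg at hcon
    have hQM : Q s ≤ M' := le_trans hcon.le (le_max_left _ _)
    have hlow : ε ≤ ∫ v, gpTail l (Q s * w v) ∂μ := by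
      have h1 : ∫ _ in Set.Ioo (1/3:ℝ) (2/3), gpTail l (C * M') ∂μ
          ≤ ∫ v in Set.Ioo (1/3:ℝ) (2/3), gpTail l (Q s * w v) ∂μ := by
        refine setIntegral_mono_ae_restrict
          (integrableOn_const (measure_ne_top μ _))
          ((gpTail_integrable μ hl hwm hw0 hQ0).integrableOn)
          ((ae_restrict_iff' measurableSet_Ioo).2 ?_)
        filter_upwards [hwC, hw0] with v h1 h2 hv
        refine gpTail_le hl (mul_nonneg hQ0 h2) ?_
        have := h1 hv
        nlinarith
      rw [setIntegral_const, smul_eq_mul, mul_comm] at h1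
      refine le_trans (le_of_eq hε') (h1.trans ?_)
      refine setIntegral_le_integral (gpTail_integrable μ hl hwm hw0 hQ0) ?_
      filter_upwards with v using gpTail_nonneg _ _
    rw [hQeq] at hlow
    have hs2 : 2/ε ≤ s := le_trans (le_max_right _ _) hs
    have hspos : 0 < s := lt_of_lt_of_le one_pos hs1
    have h2s : 2 ≤ s * ε := by
      rw [div_le_iff₀ hε] at hs2
      linarith
    have hfin := (le_div_iff₀ hspos).1 hlow
    nlinarith [mul_comm s ε]
  refine ⟨hQtop, ?_⟩
  have hmar := (marginal_asymp μ hl hwm hw1 hC hwC hm).2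
  have hcomp := hmar.comp hQtop
  refine Tendsto.congr' ?_ hcomp
  filter_upwards [eventually_ge_atTop (1:ℝ)] with s hs
  obtain ⟨hQ0, hQeq⟩ := hQ s hs
  simp only [Function.comp]
  rw [hQeq, mul_one_div]

end Aux3

section Aux4

open Real

lemma scaled_tail_tendsto {l : ℝ} (hl : 0 < l) {x T : ℝ → ℝ} {M : ℝ} (hM : 0 < M)
    (hx : Tendsto x atTop atTop) (hT : Tendsto T atTop atTop)
    (hu : Tendsto (fun t => x t ^ (1/l) / T t) atTop (nhds M))
    {c : ℝ} (hc : 0 < c) :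
    Tendsto (fun t => T t * gpTail l (x t * c)) atTop
      (nhds (l ^ (-1/l) * c ^ (-1/l) / M)) := by
  have hinner : Tendsto
      (fun t => T t ^ (-l) + l * ((x t ^ (1/l) / T t) ^ l * c)) atTop
      (nhds (0 + l * (M ^ l * c))) :=
    ((tendsto_rpow_neg_atTop hl).comp hT).add
      (((hu.rpow_const (Or.inr hl.le)).mul_const c).const_mul l)
  rw [zero_add] at hinner
  have hMl : 0 < M ^ l := Real.rpow_pos_of_pos hM l
  have hlim := hinner.rpow_const (p := -1/l) (Or.inl (by positivity : (l * (M ^ l * c)) ≠ 0))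
  have hval : (l * (M ^ l * c)) ^ (-1/l) = l ^ (-1/l) * c ^ (-1/l) / M := by
    rw [Real.mul_rpow hl.le (by positivity), Real.mul_rpow hMl.le hc.le]
    have hMM : (M ^ l) ^ (-1/l) = M⁻¹ := by
      rw [← Real.rpow_mul hM.le, show l * (-1/l) = -1 by field_simp,
        Real.rpow_neg_one]
    rw [hMM]
    ring
  rw [hval] at hlim
  refine Tendsto.congr' ?_ hlim
  filter_upwards [hx.eventually_ge_atTop 1, hT.eventually_ge_atTop 1] with t hx1 hT1
  have hx0 : (0:ℝ) < x t := lt_of_lt_of_le one_pos hx1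
  have hT0 : (0:ℝ) < T t := lt_of_lt_of_le one_pos hT1
  have hTl : 0 < T t ^ l := Real.rpow_pos_of_pos hT0 l
  have e1 : (x t ^ (1/l) / T t) ^ l = x t / T t ^ l := by
    rw [Real.div_rpow (Real.rpow_nonneg hx0.le _) hT0.le,
      ← Real.rpow_mul hx0.le, one_div, inv_mul_cancel₀ hl.ne', Real.rpow_one]
  have e3 : T t ^ (-l) + l * (x t / T t ^ l * c) = (T t ^ l)⁻¹ * (1 + l * (x t * c)) := by
    rw [Real.rpow_neg hT0.le]
    field_simp
  have e4 : ((T t ^ l)⁻¹) ^ (-1/l) = T t := by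
    rw [Real.inv_rpow hTl.le, ← Real.rpow_mul hT0.le,
      show l * (-1/l) = -1 by field_simp, Real.rpow_neg_one, inv_inv]
  show (T t ^ (-l) + l * ((x t ^ (1/l) / T t) ^ l * c)) ^ (-1/l) = T t * gpTail l (x t * c)
  rw [gpTail_eq hl (mul_nonneg hx0.le hc.le), e1, e3,
    Real.mul_rpow (by positivity)
      (by nlinarith [mul_pos (mul_pos hl hx0) hc] : (0:ℝ) ≤ 1 + l * (x t * c)), e4]

lemma side_bound {l : ℝ} (hl : 0 < l) {x T : ℝ → ℝ} {M : ℝ} (hM : 0 < M)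
    (hx : Tendsto x atTop atTop) (hT : Tendsto T atTop atTop)
    (hu : Tendsto (fun t => x t ^ (1/l) / T t) atTop (nhds M)) :
    ∀ᶠ t in atTop, ∀ c : ℝ, 1 ≤ c →
      T t * gpTail l (x t * c) ≤ l ^ (-1/l) * M⁻¹ + 1 := by
  have huinv : Tendsto (fun t => l ^ (-1/l) * (x t ^ (1/l) / T t)⁻¹) atTop
      (nhds (l ^ (-1/l) * M⁻¹)) := (hu.inv₀ hM.ne').const_mul _
  filter_upwards [hx.eventually_ge_atTop 1, hT.eventually_ge_atTop 1,
    huinv.eventually_le_const (lt_add_one _)] with t hx1 hT1 hub c hc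
  have hx0 : (0:ℝ) < x t := lt_of_lt_of_le one_pos hx1
  have hT0 : (0:ℝ) < T t := lt_of_lt_of_le one_pos hT1
  have hle : (-1 : ℝ)/l ≤ 0 := by rw [neg_div]; exact neg_nonpos.2 (by positivity)
  have h1 : gpTail l (x t * c) ≤ gpTail l (x t) := by
    refine gpTail_le hl hx0.le ?_
    nlinarith
  have h2 : gpTail l (x t) ≤ (l * x t) ^ (-1/l) := by
    rw [gpTail_eq hl hx0.le]
    exact Real.rpow_le_rpow_of_nonpos (by positivity) (by linarith) hle
  have h3 : (l * x t) ^ (-1/l) = l ^ (-1/l) * (x t) ^ (-1/l) :=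
    Real.mul_rpow hl.le hx0.le
  have h4 : T t * (x t) ^ (-1/l) = (x t ^ (1/l) / T t)⁻¹ := by
    rw [neg_div, Real.rpow_neg hx0.le, inv_div]
    ring
  calc T t * gpTail l (x t * c)
      ≤ T t * ((l * x t) ^ (-1/l)) :=
        mul_le_mul_of_nonneg_left (h1.trans h2) hT0.le
    _ = l ^ (-1/l) * (T t * (x t) ^ (-1/l)) := by rw [h3]; ring
    _ = l ^ (-1/l) * (x t ^ (1/l) / T t)⁻¹ := by rw [h4]
    _ ≤ l ^ (-1/l) * M⁻¹ + 1 := hub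

end Aux4

section Aux5

open Real

lemma joint_eq (μ : Measure ℝ) [IsProbabilityMeasure μ] {l : ℝ} (hl : 0 < l)
    {w₁ w₂ : ℝ → ℝ} (hwm₁ : Measurable w₁) (hwm₂ : Measurable w₂)
    (hw1 : ∀ᵐ v ∂μ, 1 ≤ w₁ v) (hw2 : ∀ᵐ v ∂μ, 1 ≤ w₂ v)
    {x y T : ℝ → ℝ} {M₁ M₂ : ℝ} (hM₁ : 0 < M₁) (hM₂ : 0 < M₂)
    (hx : Tendsto x atTop atTop) (hy : Tendsto y atTop atTop)
    (hT : Tendsto T atTop atTop)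
    (hu₁ : Tendsto (fun t => x t ^ (1/l) / T t) atTop (nhds M₁))
    (hu₂ : Tendsto (fun t => y t ^ (1/l) / T t) atTop (nhds M₂)) :
    Tendsto (fun t => T t * ∫ v, gpTail l (max (x t * w₁ v) (y t * w₂ v)) ∂μ) atTop
      (nhds (∫ v, min (l ^ (-1/l) * w₁ v ^ (-1/l) / M₁)
        (l ^ (-1/l) * w₂ v ^ (-1/l) / M₂) ∂μ)) := by
  have hDCT : Tendsto (fun t => ∫ v,
      min (T t * gpTail l (x t * w₁ v)) (T t * gpTail l (y t * w₂ v)) ∂μ) atTop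
      (nhds (∫ v, min (l ^ (-1/l) * w₁ v ^ (-1/l) / M₁)
        (l ^ (-1/l) * w₂ v ^ (-1/l) / M₂) ∂μ)) := by
    refine tendsto_integral_filter_of_dominated_convergence
      (fun _ => l ^ (-1/l) * M₁⁻¹ + 1) ?_ ?_ (integrable_const _) ?_
    · filter_upwards with t
      exact ((((gpTail_measurable l).comp (hwm₁.const_mul (x t))).const_mul (T t)).min
        (((gpTail_measurable l).comp (hwm₂.const_mul (y t))).const_mul (T t))).aestronglyMeasurable
    · filter_upwards [side_bound hl hM₁ hx hT hu₁, hT.eventually_ge_atTop 0] with t hb hT0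
      filter_upwards [hw1, hw2] with v h1 h2
      have hnn : 0 ≤ min (T t * gpTail l (x t * w₁ v)) (T t * gpTail l (y t * w₂ v)) :=
        le_min (mul_nonneg hT0 (gpTail_nonneg _ _)) (mul_nonneg hT0 (gpTail_nonneg _ _))
      rw [Real.norm_eq_abs, abs_of_nonneg hnn]
      exact le_trans (min_le_left _ _) (hb _ h1)
    · filter_upwards [hw1, hw2] with v h1 h2
      exact (scaled_tail_tendsto hl hM₁ hx hT hu₁ (lt_of_lt_of_le one_pos h1)).min
        (scaled_tail_tendsto hl hM₂ hy hT hu₂ (lt_of_lt_of_le one_pos h2))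
  refine Tendsto.congr' ?_ hDCT
  filter_upwards [hx.eventually_ge_atTop 0, hy.eventually_ge_atTop 0,
    hT.eventually_ge_atTop 0] with t hx0 hy0 hT0
  rw [← integral_const_mul]
  refine integral_congr_ae ?_
  filter_upwards [hw1, hw2] with v h1 h2
  have ha : 0 ≤ x t * w₁ v := mul_nonneg hx0 (by linarith)
  have hb : 0 ≤ y t * w₂ v := mul_nonneg hy0 (by linarith)
  rw [gpTail_max hl ha hb, mul_min_nonneg hT0]

lemma joint_lt (μ : Measure ℝ) [IsProbabilityMeasure μ] {l : ℝ} (hl : 0 < l)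
    {w₁ w₂ : ℝ → ℝ} (hwm₁ : Measurable w₁) (hwm₂ : Measurable w₂)
    (hw1 : ∀ᵐ v ∂μ, 1 ≤ w₁ v) (hw2 : ∀ᵐ v ∂μ, 1 ≤ w₂ v)
    {x y S T : ℝ → ℝ} {M₁ M₂ : ℝ} (hM₁ : 0 < M₁) (hM₂ : 0 < M₂)
    (hx : Tendsto x atTop atTop) (hy : Tendsto y atTop atTop)
    (hS : Tendsto S atTop atTop) (hT : Tendsto T atTop atTop)
    (hu₁ : Tendsto (fun t => x t ^ (1/l) / S t) atTop (nhds M₁))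
    (hu₂ : Tendsto (fun t => y t ^ (1/l) / T t) atTop (nhds M₂))
    (hST : Tendsto (fun t => T t / S t) atTop atTop)
    (hM2v : l ^ (-1/l) * ∫ v, w₂ v ^ (-1/l) ∂μ = M₂) :
    Tendsto (fun t => T t * ∫ v, gpTail l (max (x t * w₁ v) (y t * w₂ v)) ∂μ) atTop
      (nhds 1) := by
  have hDCT : Tendsto (fun t => ∫ v,
      min (T t * gpTail l (x t * w₁ v)) (T t * gpTail l (y t * w₂ v)) ∂μ) atTop
      (nhds (∫ v, l ^ (-1/l) * w₂ v ^ (-1/l) / M₂ ∂μ)) := by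
    refine tendsto_integral_filter_of_dominated_convergence
      (fun _ => l ^ (-1/l) * M₂⁻¹ + 1) ?_ ?_ (integrable_const _) ?_
    · filter_upwards with t
      exact ((((gpTail_measurable l).comp (hwm₁.const_mul (x t))).const_mul (T t)).min
        (((gpTail_measurable l).comp (hwm₂.const_mul (y t))).const_mul (T t))).aestronglyMeasurable
    · filter_upwards [side_bound hl hM₂ hy hT hu₂, hT.eventually_ge_atTop 0] with t hb hT0
      filter_upwards [hw1, hw2] with v h1 h2
      have hnn : 0 ≤ min (T t * gpTail l (x t * w₁ v)) (T t * gpTail l (y t * w₂ v)) :=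
        le_min (mul_nonneg hT0 (gpTail_nonneg _ _)) (mul_nonneg hT0 (gpTail_nonneg _ _))
      rw [Real.norm_eq_abs, abs_of_nonneg hnn]
      exact le_trans (min_le_right _ _) (hb _ h2)
    · filter_upwards [hw1, hw2] with v h1 h2
      have hAside : Tendsto (fun t => T t * gpTail l (x t * w₁ v)) atTop atTop := by
        have hbase := scaled_tail_tendsto hl hM₁ hx hS hu₁ (lt_of_lt_of_le one_pos h1)
        have hprod := hST.atTop_mul_pos (by positivity :
            0 < l ^ (-1/l) * w₁ v ^ (-1/l) / M₁) hbase
        refine Tendsto.congr' ?_ hprod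
        filter_upwards [hS.eventually_ge_atTop 1] with t hS1
        have hS0 : (0:ℝ) < S t := lt_of_lt_of_le one_pos hS1
        show T t / S t * (S t * gpTail l (x t * w₁ v)) = T t * gpTail l (x t * w₁ v)
        field_simp
      exact tendsto_min_atTop_nhds hAside
        (scaled_tail_tendsto hl hM₂ hy hT hu₂ (lt_of_lt_of_le one_pos h2))
  have hval : ∫ v, l ^ (-1/l) * w₂ v ^ (-1/l) / M₂ ∂μ = 1 := by
    have e : ∀ v, l ^ (-1/l) * w₂ v ^ (-1/l) / M₂
        = M₂⁻¹ * (l ^ (-1/l) * w₂ v ^ (-1/l)) := fun v => by ring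
    calc ∫ v, l ^ (-1/l) * w₂ v ^ (-1/l) / M₂ ∂μ
        = ∫ v, M₂⁻¹ * (l ^ (-1/l) * w₂ v ^ (-1/l)) ∂μ :=
          integral_congr_ae (Eventually.of_forall e)
      _ = M₂⁻¹ * (l ^ (-1/l) * ∫ v, w₂ v ^ (-1/l) ∂μ) := by
          rw [integral_const_mul, integral_const_mul]
      _ = 1 := by rw [hM2v]; exact inv_mul_cancel₀ hM₂.ne'
  rw [hval] at hDCT
  refine Tendsto.congr' ?_ hDCT
  filter_upwards [hx.eventually_ge_atTop 0, hy.eventually_ge_atTop 0,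
    hT.eventually_ge_atTop 0] with t hx0 hy0 hT0
  rw [← integral_const_mul]
  refine integral_congr_ae ?_
  filter_upwards [hw1, hw2] with v h1 h2
  have ha : 0 ≤ x t * w₁ v := mul_nonneg hx0 (by linarith)
  have hb : 0 ≤ y t * w₂ v := mul_nonneg hy0 (by linarith)
  rw [gpTail_max hl ha hb, mul_min_nonneg hT0]

end Aux5

/-- Proposition 1: for `λ > 0` and `β, γ > 0`,
`S(q_A(t^β), q_B(t^γ)) = t^{−max(β,γ)} θ(t)` for `t ≥ 1`, with `θ` slowly
varying; `θ(t) → χ_λ` if `β = γ` and `θ(t) → 1` otherwise. -/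
theorem stmt1 (N : ℝ → ℝ → ℝ) (hN : IsNorm2 N) (hC1 : CondC1 N) (hC2 : CondC2 N)
    (hC3 : CondC3 N) (μ : Measure ℝ) [IsProbabilityMeasure μ] (hμ : GoodMeasure μ)
    (l β γ : ℝ) (hl : 0 < l) (hβ : 0 < β) (hγ : 0 < γ) (qA qB : ℝ → ℝ)
    (hqA : ∀ t : ℝ, 1 ≤ t → 0 ≤ qA t ∧ survA N μ l (qA t) = 1 / t)
    (hqB : ∀ t : ℝ, 1 ≤ t → 0 ≤ qB t ∧ survB N μ l (qB t) = 1 / t) :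
    ∃ θ : ℝ → ℝ, SlowlyVarying θ ∧
      (∀ t : ℝ, 1 ≤ t →
        survJ N μ l (qA (t ^ β)) (qB (t ^ γ)) = t ^ (-(max β γ)) * θ t) ∧
      (β = γ → Tendsto θ atTop (nhds (chiLam N μ l))) ∧
      (β ≠ γ → Tendsto θ atTop (nhds 1)) := by
  classical
  obtain ⟨hμIcc, hμatom, hμpos⟩ := hμ
  have hle0 : (-1 : ℝ)/l ≤ 0 := by rw [neg_div]; exact neg_nonpos.2 (by positivity)
  -- almost every point lies in (0,1)
  have hae : ∀ᵐ v ∂μ, v ∈ Set.Ioo (0:ℝ) 1 := by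
    have hsub : (Set.Ioo (0:ℝ) 1)ᶜ ⊆ ((Set.Icc (0:ℝ) 1)ᶜ ∪ {0}) ∪ {1} := by
      intro v hv
      simp only [Set.mem_compl_iff, Set.mem_Ioo, not_and_or, not_lt] at hv
      by_cases h : v ∈ Set.Icc (0:ℝ) 1
      · rcases hv with h0 | h1
        · left; right; simp [le_antisymm h0 h.1]
        · right; simp [le_antisymm h.2 h1]
      · left; left; exact h
    have hz : μ ((Set.Ioo (0:ℝ) 1)ᶜ) = 0 :=
      measure_mono_null hsub
        (measure_union_null (measure_union_null hμIcc (hμatom 0)) (hμatom 1))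
    exact ae_iff.2 hz
  -- the bound C on tau over the middle interval
  set C : ℝ := 3 * (N 1 0 + N 0 1) with hCdef
  have hN10 : 1 ≤ N 1 0 := by
    have := hC2 1 0; simp at this; linarith [this]
  have hN01 : 1 ≤ N 0 1 := by
    have := hC2 0 1; simp at this; linarith [this]
  have hCge1 : 1 ≤ C := by rw [hCdef]; nlinarith
  have hCpos : (0:ℝ) < C := by linarith
  have hm : 0 < μ (Set.Ioo (1/3:ℝ) (2/3)) :=
    hμpos _ _ (by norm_num) (by norm_num) (by norm_num)
  -- the two weight functions
  have hwm₁ : Measurable (tau N) := tau_measurable hN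
  have hwm₂ : Measurable (fun v => tau N (1 - v)) :=
    (tau_measurable hN).comp (measurable_const.sub measurable_id)
  have hw1 : ∀ᵐ v ∂μ, 1 ≤ tau N v :=
    hae.mono fun v hv => tau_ge_one hC2 hv.1 hv.2.le
  have hw2 : ∀ᵐ v ∂μ, 1 ≤ tau N (1 - v) :=
    hae.mono fun v hv => tau_ge_one hC2 (by linarith [hv.2]) (by linarith [hv.1])
  have hwC₁ : ∀ᵐ v ∂μ, v ∈ Set.Ioo (1/3:ℝ) (2/3) → tau N v ≤ C :=
    Eventually.of_forall fun v hv => tau_le_C hN hv.1.le (by linarith [hv.2])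
  have hwC₂ : ∀ᵐ v ∂μ, v ∈ Set.Ioo (1/3:ℝ) (2/3) → tau N (1 - v) ≤ C :=
    Eventually.of_forall fun v hv =>
      tau_le_C hN (by linarith [hv.2]) (by linarith [hv.1])
  -- marginal asymptotics
  have hI₁pos : 0 < ∫ v, tau N v ^ (-1/l) ∂μ :=
    (marginal_asymp μ hl hwm₁ hw1 hCge1 hwC₁ hm).1
  have hI₂pos : 0 < ∫ v, tau N (1 - v) ^ (-1/l) ∂μ :=
    (marginal_asymp μ hl hwm₂ hw2 hCge1 hwC₂ hm).1
  have hM₁pos : 0 < mu1 N μ l := by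
    rw [mu1]; exact mul_pos (Real.rpow_pos_of_pos hl _) hI₁pos
  have hM₂pos : 0 < mu2 N μ l := by
    rw [mu2]; exact mul_pos (Real.rpow_pos_of_pos hl _) hI₂pos
  obtain ⟨hQA, hUA'⟩ := q_asymp μ hl hwm₁ hw1 hCge1 hwC₁ hm (Q := qA) hqA
  obtain ⟨hQB, hUB'⟩ := q_asymp μ hl hwm₂ hw2 hCge1 hwC₂ hm (Q := qB) hqB
  have hUA : Tendsto (fun s => qA s ^ (1/l) / s) atTop (nhds (mu1 N μ l)) := hUA'
  have hUB : Tendsto (fun s => qB s ^ (1/l) / s) atTop (nhds (mu2 N μ l)) := hUB'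
  have hTβ : Tendsto (fun t : ℝ => t ^ β) atTop atTop := tendsto_rpow_atTop hβ
  have hTγ : Tendsto (fun t : ℝ => t ^ γ) atTop atTop := tendsto_rpow_atTop hγ
  have hxA : Tendsto (fun t : ℝ => qA (t ^ β)) atTop atTop := hQA.comp hTβ
  have hxB : Tendsto (fun t : ℝ => qB (t ^ γ)) atTop atTop := hQB.comp hTγ
  have huA : Tendsto (fun t : ℝ => qA (t ^ β) ^ (1/l) / t ^ β) atTop
      (nhds (mu1 N μ l)) := hUA.comp hTβ
  have huB : Tendsto (fun t : ℝ => qB (t ^ γ) ^ (1/l) / t ^ γ) atTop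
      (nhds (mu2 N μ l)) := hUB.comp hTγ
  -- positivity of chi
  have hchi_pos : 0 < chiLam N μ l := by
    rw [chiLam]
    refine mul_pos (Real.rpow_pos_of_pos hl _) ?_
    have hmeas : Measurable (fun v => min (tau N v ^ (-1/l) / mu1 N μ l)
        (tau N (1 - v) ^ (-1/l) / mu2 N μ l)) :=
      (((myMeasurable_rpow_const _).comp hwm₁).div_const _).min
        (((myMeasurable_rpow_const _).comp hwm₂).div_const _)
    have hint : Integrable (fun v => min (tau N v ^ (-1/l) / mu1 N μ l)
        (tau N (1 - v) ^ (-1/l) / mu2 N μ l)) μ := by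
      refine Integrable.mono' (integrable_const ((mu1 N μ l)⁻¹))
        hmeas.aestronglyMeasurable ?_
      filter_upwards [hw1, hw2] with v h1 h2
      have ha : 0 ≤ tau N v ^ (-1/l) / mu1 N μ l :=
        div_nonneg (Real.rpow_nonneg (by linarith) _) hM₁pos.le
      have hb : 0 ≤ tau N (1 - v) ^ (-1/l) / mu2 N μ l :=
        div_nonneg (Real.rpow_nonneg (by linarith) _) hM₂pos.le
      rw [Real.norm_eq_abs, abs_of_nonneg (le_min ha hb)]
      refine le_trans (min_le_left _ _) ?_
      calc tau N v ^ (-1/l) / mu1 N μ l ≤ 1 / mu1 N μ l := by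
            gcongr
            exact Real.rpow_le_one_of_one_le_of_nonpos h1 hle0
        _ = (mu1 N μ l)⁻¹ := one_div _
    refine integral_pos_aux μ hint ?_ measurableSet_Ioo hm
      (c := min (C ^ (-1/l) / mu1 N μ l) (C ^ (-1/l) / mu2 N μ l)) ?_ ?_
    · filter_upwards [hw1, hw2] with v h1 h2
      exact le_min (div_nonneg (Real.rpow_nonneg (by linarith) _) hM₁pos.le)
        (div_nonneg (Real.rpow_nonneg (by linarith) _) hM₂pos.le)
    · exact lt_min (div_pos (Real.rpow_pos_of_pos hCpos _) hM₁pos)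
        (div_pos (Real.rpow_pos_of_pos hCpos _) hM₂pos)
    · filter_upwards [hw1, hw2, hwC₁, hwC₂] with v h1 h2 hc1 hc2 hv
      exact min_le_min
        ((div_le_div_iff_of_pos_right hM₁pos).2
          (Real.rpow_le_rpow_of_nonpos (by linarith) (hc1 hv) hle0))
        ((div_le_div_iff_of_pos_right hM₂pos).2
          (Real.rpow_le_rpow_of_nonpos (by linarith) (hc2 hv) hle0))
  -- the main limit
  have hmain : Tendsto (fun t => t ^ (max β γ) * survJ N μ l (qA (t ^ β)) (qB (t ^ γ)))
      atTop (nhds (if β = γ then chiLam N μ l else 1)) := by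
    rcases lt_trichotomy β γ with hlt | heq | hgt
    · rw [if_neg hlt.ne, max_eq_right hlt.le]
      have hST : Tendsto (fun t : ℝ => t ^ γ / t ^ β) atTop atTop := by
        refine Tendsto.congr' ?_ (tendsto_rpow_atTop (by linarith : (0:ℝ) < γ - β))
        filter_upwards [eventually_gt_atTop (0:ℝ)] with t ht
        rw [Real.rpow_sub ht]
      exact joint_lt μ hl hwm₁ hwm₂ hw1 hw2 hM₁pos hM₂pos hxA hxB hTβ hTγ
        huA huB hST rfl
    · subst heq
      rw [if_pos rfl, max_self]
      have hjoint := joint_eq μ hl hwm₁ hwm₂ hw1 hw2 hM₁pos hM₂pos hxA hxB hTβ huA huB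
      have hchi : chiLam N μ l
          = ∫ v, min (l ^ (-1/l) * tau N v ^ (-1/l) / mu1 N μ l)
              (l ^ (-1/l) * tau N (1 - v) ^ (-1/l) / mu2 N μ l) ∂μ := by
        rw [chiLam, ← integral_const_mul]
        refine integral_congr_ae (Eventually.of_forall fun v => ?_)
        simp only [mul_min_nonneg (Real.rpow_nonneg hl.le (-1/l) : (0:ℝ) ≤ l ^ (-1/l)),
          mul_div_assoc]
      rw [hchi]
      exact hjoint
    · rw [if_neg hgt.ne', max_eq_left hgt.le]
      have hST : Tendsto (fun t : ℝ => t ^ β / t ^ γ) atTop atTop := by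
        refine Tendsto.congr' ?_ (tendsto_rpow_atTop (by linarith : (0:ℝ) < β - γ))
        filter_upwards [eventually_gt_atTop (0:ℝ)] with t ht
        rw [Real.rpow_sub ht]
      have hjoint := joint_lt μ hl hwm₂ hwm₁ hw2 hw1 hM₂pos hM₁pos hxB hxA hTγ hTβ
        huB huA hST rfl
      refine Tendsto.congr' ?_ hjoint
      filter_upwards with t
      congr 1
      refine integral_congr_ae (Eventually.of_forall fun v => ?_)
      exact congrArg (gpTail l) (max_comm _ _)
  set L : ℝ := if β = γ then chiLam N μ l else 1 with hLdef
  have hLpos : 0 < L := by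
    rw [hLdef]; split_ifs
    · exact hchi_pos
    · exact one_pos
  -- the slowly varying factor
  refine ⟨fun t => if 1 ≤ t then t ^ (max β γ) * survJ N μ l (qA (t ^ β)) (qB (t ^ γ))
    else L, ?_, ?_, ?_, ?_⟩
  case _ =>
    -- SlowlyVarying
    have hθev : (fun t => if 1 ≤ t then
          t ^ (max β γ) * survJ N μ l (qA (t ^ β)) (qB (t ^ γ)) else L)
        =ᶠ[atTop] fun t => t ^ (max β γ) * survJ N μ l (qA (t ^ β)) (qB (t ^ γ))  := by
      filter_upwards [eventually_ge_atTop (1:ℝ)] with t ht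
      rw [if_pos ht]
    have hθtend : Tendsto (fun t => if 1 ≤ t then
        t ^ (max β γ) * survJ N μ l (qA (t ^ β)) (qB (t ^ γ)) else L) atTop (nhds L) := by
      refine Tendsto.congr' hθev.symm ?_
      rw [hLdef]
      exact hmain
    constructor
    · exact hθtend.eventually_const_lt hLpos
    · intro a ha
      have hat : Tendsto (fun t : ℝ => a * t) atTop atTop :=
        Tendsto.const_mul_atTop ha tendsto_id
      have h1 := (hθtend.comp hat).div hθtend hLpos.ne'
      rw [div_self hLpos.ne'] at h1
      exact h1
  case _ =>
    intro t ht
    have h0 : (0:ℝ) < t := lt_of_lt_of_le one_pos ht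
    show survJ N μ l (qA (t ^ β)) (qB (t ^ γ)) = t ^ (-(max β γ)) *
      (if (1:ℝ) ≤ t then t ^ (max β γ) * survJ N μ l (qA (t ^ β)) (qB (t ^ γ)) else L)
    rw [if_pos ht, ← mul_assoc, ← Real.rpow_add h0, neg_add_cancel, Real.rpow_zero,
      one_mul]
  case _ =>
    intro h
    have hθev : (fun t => if 1 ≤ t then
          t ^ (max β γ) * survJ N μ l (qA (t ^ β)) (qB (t ^ γ)) else L)
        =ᶠ[atTop] fun t => t ^ (max β γ) * survJ N μ l (qA (t ^ β)) (qB (t ^ γ))  := by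
      filter_upwards [eventually_ge_atTop (1:ℝ)] with t ht
      rw [if_pos ht]
    refine Tendsto.congr' hθev.symm ?_
    rw [hLdef, if_pos h] at hmain
    exact hmain
  case _ =>
    intro h
    have hθev : (fun t => if 1 ≤ t then
          t ^ (max β γ) * survJ N μ l (qA (t ^ β)) (qB (t ^ γ)) else L)
        =ᶠ[atTop] fun t => t ^ (max β γ) * survJ N μ l (qA (t ^ β)) (qB (t ^ γ))  := by
      filter_upwards [eventually_ge_atTop (1:ℝ)] with t ht
      rw [if_pos ht]
    refine Tendsto.congr' hθev.symm ?_
    rw [hLdef, if_neg h] at hmain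
    exact hmain
end
end

section
/- Let λ = 0 and β, γ > 0. Then there exist continuous slowly varying functions l_A, l_B on [1,∞), taking values in [m₊, 1] and [m₋, 1] respectively, such that q_A(t^β) = log{t^β l_A(t)} and q_B(t^γ) = log{t^γ l_B(t)} for all t ≥ 1, and l_A(t) → m₊ and l_B(t) → m₋ as t → ∞. -/
open MeasureTheory Filter Set

noncomputable section

/-- `Ω₀ = {v ∈ [0,1] : τ(v) = 1}`. -/
def Omega0 (N : ℝ → ℝ → ℝ) : Set ℝ := {v | v ∈ Set.Icc (0:ℝ) 1 ∧ tau N v = 1}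

/-- `v′ = inf Ω₀`. -/
def vlo (N : ℝ → ℝ → ℝ) : ℝ := sInf (Omega0 N)

/-- `v″ = sup Ω₀`. -/
def vhi (N : ℝ → ℝ → ℝ) : ℝ := sSup (Omega0 N)

/-- The distribution function `F_V(x) = μ(−∞, x]`. -/
def Fdist (μ : Measure ℝ) (x : ℝ) : ℝ := (μ (Set.Iic x)).toReal

/-- `m₊ = F_V(v″) − F_V(v′)`. -/
def mPlus (N : ℝ → ℝ → ℝ) (μ : Measure ℝ) : ℝ := Fdist μ (vhi N) - Fdist μ (vlo N)

/-- `m₋ = F_V(1−v′) − F_V(1−v″)`. -/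
def mMinus (N : ℝ → ℝ → ℝ) (μ : Measure ℝ) : ℝ :=
  Fdist μ (1 - vlo N) - Fdist μ (1 - vhi N)


open Topology

namespace Stmt4Aux


private def gI (f : ℝ → ℝ) (x v : ℝ) : ℝ := Real.exp (-(x * (f v - 1)))

private def LI (μ : Measure ℝ) (f : ℝ → ℝ) (x : ℝ) : ℝ := ∫ v, gI f x v ∂μ

private def SI (μ : Measure ℝ) (f : ℝ → ℝ) (x : ℝ) : ℝ := ∫ v, Real.exp (-(x * f v)) ∂μ

variable {μ : Measure ℝ} {f : ℝ → ℝ}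

private lemma gI_meas (hfm : Measurable f) (x : ℝ) : Measurable (gI f x) :=
  Real.measurable_exp.comp ((measurable_const.mul (hfm.sub measurable_const)).neg)

private lemma gI_pos (x v : ℝ) : 0 < gI f x v := Real.exp_pos _

private lemma gI_le_one (hf1 : ∀ v, 1 ≤ f v) {x : ℝ} (hx : 0 ≤ x) (v : ℝ) : gI f x v ≤ 1 :=
  Real.exp_le_one_iff.mpr (neg_nonpos.mpr (mul_nonneg hx (by linarith [hf1 v])))

private lemma gI_int [IsProbabilityMeasure μ] (hfm : Measurable f) (hf1 : ∀ v, 1 ≤ f v)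
    {x : ℝ} (hx : 0 ≤ x) : Integrable (gI f x) μ :=
  (integrable_const (1:ℝ)).mono' (gI_meas hfm x).aestronglyMeasurable
    (ae_of_all _ fun v => by
      rw [Real.norm_eq_abs, abs_of_pos (gI_pos x v)]; exact gI_le_one hf1 hx v)

private lemma SI_int [IsProbabilityMeasure μ] (hfm : Measurable f) (hf1 : ∀ v, 1 ≤ f v)
    {x : ℝ} (hx : 0 ≤ x) : Integrable (fun v => Real.exp (-(x * f v))) μ :=
  (integrable_const (1:ℝ)).mono'
    (Real.measurable_exp.comp ((measurable_const.mul hfm).neg)).aestronglyMeasurable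
    (ae_of_all _ fun v => by
      rw [Real.norm_eq_abs, abs_of_pos (Real.exp_pos _)]
      exact Real.exp_le_one_iff.mpr (neg_nonpos.mpr (mul_nonneg hx (by linarith [hf1 v]))))

private lemma LI_eq_exp_mul_SI (x : ℝ) : LI μ f x = Real.exp x * SI μ f x := by
  rw [LI, SI, ← integral_const_mul]
  congr 1
  ext v
  rw [gI, ← Real.exp_add]
  ring_nf

private lemma LI_pos [IsProbabilityMeasure μ] (hfm : Measurable f) (hf1 : ∀ v, 1 ≤ f v)
    {x : ℝ} (hx : 0 ≤ x) : 0 < LI μ f x := by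
  refine (integral_pos_iff_support_of_nonneg (fun v => (gI_pos x v).le) (gI_int hfm hf1 hx)).mpr ?_
  have hsupp : Function.support (gI f x) = Set.univ :=
    Set.eq_univ_of_forall fun v => (gI_pos x v).ne'
  rw [hsupp]
  simp

private lemma LI_le_one [IsProbabilityMeasure μ] (hfm : Measurable f) (hf1 : ∀ v, 1 ≤ f v)
    {x : ℝ} (hx : 0 ≤ x) : LI μ f x ≤ 1 := by
  have := integral_mono (μ := μ) (gI_int hfm hf1 hx) (integrable_const (1:ℝ)) (gI_le_one hf1 hx)
  simpa [LI] using this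

private lemma LI_anti [IsProbabilityMeasure μ] (hfm : Measurable f) (hf1 : ∀ v, 1 ≤ f v)
    {x y : ℝ} (hx : 0 ≤ x) (hxy : x ≤ y) : LI μ f y ≤ LI μ f x := by
  refine integral_mono (gI_int hfm hf1 (hx.trans hxy)) (gI_int hfm hf1 hx) fun v => ?_
  exact Real.exp_le_exp.mpr (by nlinarith [hf1 v])

private lemma SI_anti [IsProbabilityMeasure μ] (hfm : Measurable f) (hf1 : ∀ v, 1 ≤ f v)
    {x y : ℝ} (hx : 0 ≤ x) (hxy : x ≤ y) : SI μ f y ≤ SI μ f x := by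
  refine integral_mono (SI_int hfm hf1 (hx.trans hxy)) (SI_int hfm hf1 hx) fun v => ?_
  exact Real.exp_le_exp.mpr (by nlinarith [hf1 v])

private lemma SI_strict_anti [IsProbabilityMeasure μ] (hfm : Measurable f) (hf1 : ∀ v, 1 ≤ f v)
    {x y : ℝ} (hx : 0 ≤ x) (hxy : x < y) : SI μ f y < SI μ f x := by
  have hy : 0 ≤ y := hx.trans hxy.le
  have hpt : ∀ v, 0 < Real.exp (-(x * f v)) - Real.exp (-(y * f v)) := fun v =>
    sub_pos.mpr (Real.exp_lt_exp.mpr (by nlinarith [hf1 v]))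
  have hd : Integrable (fun v => Real.exp (-(x * f v)) - Real.exp (-(y * f v))) μ :=
    (SI_int hfm hf1 hx).sub (SI_int hfm hf1 hy)
  have hpos := (integral_pos_iff_support_of_nonneg (fun v => (hpt v).le) hd).mpr (by
    have hsupp : Function.support (fun v => Real.exp (-(x * f v)) - Real.exp (-(y * f v)))
        = Set.univ := Set.eq_univ_of_forall fun v => (hpt v).ne'
    rw [hsupp]; simp)
  rw [integral_sub (SI_int hfm hf1 hx) (SI_int hfm hf1 hy)] at hpos
  change (0:ℝ) < SI μ f x - SI μ f y at hpos
  linarith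

private lemma SI_pos [IsProbabilityMeasure μ] (hfm : Measurable f) (hf1 : ∀ v, 1 ≤ f v)
    {x : ℝ} (hx : 0 ≤ x) : 0 < SI μ f x := by
  refine (integral_pos_iff_support_of_nonneg (fun v => (Real.exp_pos _).le)
    (SI_int hfm hf1 hx)).mpr ?_
  have hsupp : Function.support (fun v => Real.exp (-(x * f v))) = Set.univ :=
    Set.eq_univ_of_forall fun v => (Real.exp_pos _).ne'
  rw [hsupp]; simp



variable {μ : Measure ℝ} {f : ℝ → ℝ}

private lemma LB [IsProbabilityMeasure μ] (hfm : Measurable f) (hf1 : ∀ v, 1 ≤ f v)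
    {ε x : ℝ} (hε : 0 < ε) (hx : 0 ≤ x) :
    (μ {v | f v < 1 + ε}).toReal * Real.exp (-(x * ε)) ≤ LI μ f x := by
  set A : Set ℝ := {v | f v < 1 + ε} with hA
  have hAmeas : MeasurableSet A := hfm measurableSet_Iio
  have h1 : (μ A).toReal * Real.exp (-(x * ε)) = ∫ _ in A, Real.exp (-(x * ε)) ∂μ := by
    rw [setIntegral_const, smul_eq_mul, measureReal_def]
  rw [h1]
  calc ∫ _ in A, Real.exp (-(x * ε)) ∂μ ≤ ∫ v in A, gI f x v ∂μ := by
        refine setIntegral_mono_on (integrableOn_const (measure_lt_top μ A).ne)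
          ((gI_int hfm hf1 hx).integrableOn) hAmeas fun v hv => ?_
        refine Real.exp_le_exp.mpr (neg_le_neg ?_)
        have : f v - 1 ≤ ε := by have := hv; simp only [hA, Set.mem_setOf_eq] at this; linarith
        exact mul_le_mul_of_nonneg_left this hx
    _ ≤ LI μ f x := setIntegral_le_integral (gI_int hfm hf1 hx)
        (ae_of_all _ fun v => (gI_pos x v).le)

private lemma INEQ [IsProbabilityMeasure μ] (hfm : Measurable f) (hf1 : ∀ v, 1 ≤ f v)
    {ε x d : ℝ} (hε : 0 < ε) (hx : 0 ≤ x) (hd : 0 ≤ d) :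
    Real.exp (-(d * ε)) * (LI μ f x - Real.exp (-(x * ε))) ≤ LI μ f (x + d) := by
  set A : Set ℝ := {v | f v < 1 + ε} with hA
  have hAmeas : MeasurableSet A := hfm measurableSet_Iio
  have hxd : (0:ℝ) ≤ x + d := by linarith
  have hsplit : (∫ v in A, gI f x v ∂μ) + ∫ v in Aᶜ, gI f x v ∂μ = LI μ f x :=
    integral_add_compl hAmeas (gI_int hfm hf1 hx)
  have hcompl : ∫ v in Aᶜ, gI f x v ∂μ ≤ Real.exp (-(x * ε)) := by
    calc ∫ v in Aᶜ, gI f x v ∂μ ≤ ∫ _ in Aᶜ, Real.exp (-(x * ε)) ∂μ := by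
          refine setIntegral_mono_on ((gI_int hfm hf1 hx).integrableOn)
            (integrableOn_const (measure_lt_top μ _).ne) hAmeas.compl fun v hv => ?_
          refine Real.exp_le_exp.mpr (neg_le_neg ?_)
          have hv' : ε ≤ f v - 1 := by
            simp only [hA, Set.mem_compl_iff, Set.mem_setOf_eq, not_lt] at hv; linarith
          exact mul_le_mul_of_nonneg_left hv' hx
      _ = (μ Aᶜ).toReal * Real.exp (-(x * ε)) := by rw [setIntegral_const, smul_eq_mul, measureReal_def]
      _ ≤ 1 * Real.exp (-(x * ε)) := by
          refine mul_le_mul_of_nonneg_right ?_ (Real.exp_pos _).le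
          calc (μ Aᶜ).toReal ≤ (μ Set.univ).toReal :=
                ENNReal.toReal_mono (measure_ne_top μ _) (measure_mono (Set.subset_univ _))
            _ = 1 := by simp
      _ = Real.exp (-(x * ε)) := one_mul _
  have key1 : LI μ f x - Real.exp (-(x * ε)) ≤ ∫ v in A, gI f x v ∂μ := by linarith
  have key2 : Real.exp (-(d * ε)) * ∫ v in A, gI f x v ∂μ ≤ ∫ v in A, gI f (x + d) v ∂μ := by
    rw [← integral_const_mul]
    refine setIntegral_mono_on (((gI_int hfm hf1 hx).const_mul _).integrableOn)
      ((gI_int hfm hf1 hxd).integrableOn) hAmeas fun v hv => ?_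
    have hv' : f v - 1 ≤ ε := by simp only [hA, Set.mem_setOf_eq] at hv; linarith
    have hsplitexp : gI f (x + d) v = gI f x v * Real.exp (-(d * (f v - 1))) := by
      rw [gI, gI, ← Real.exp_add]; ring_nf
    rw [hsplitexp, mul_comm (Real.exp (-(d * ε)))]
    refine mul_le_mul_of_nonneg_left (Real.exp_le_exp.mpr (neg_le_neg ?_)) (gI_pos x v).le
    exact mul_le_mul_of_nonneg_left hv' hd
  have key3 : ∫ v in A, gI f (x + d) v ∂μ ≤ LI μ f (x + d) :=
    setIntegral_le_integral (gI_int hfm hf1 hxd) (ae_of_all _ fun v => (gI_pos _ v).le)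
  calc Real.exp (-(d * ε)) * (LI μ f x - Real.exp (-(x * ε)))
      ≤ Real.exp (-(d * ε)) * ∫ v in A, gI f x v ∂μ :=
        mul_le_mul_of_nonneg_left key1 (Real.exp_pos _).le
    _ ≤ ∫ v in A, gI f (x + d) v ∂μ := key2
    _ ≤ LI μ f (x + d) := key3

private lemma m_eq_indicator [IsProbabilityMeasure μ] (hfm : Measurable f) :
    (μ {v | f v = 1}).toReal = ∫ v, Set.indicator {v | f v = 1} (fun _ => (1:ℝ)) v ∂μ := by
  rw [integral_indicator_const (1:ℝ) (show MeasurableSet {v | f v = 1} from hfm (measurableSet_singleton 1)), smul_eq_mul, mul_one, measureReal_def]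

private lemma L_ge_m [IsProbabilityMeasure μ] (hfm : Measurable f) (hf1 : ∀ v, 1 ≤ f v)
    {x : ℝ} (hx : 0 ≤ x) : (μ {v | f v = 1}).toReal ≤ LI μ f x := by
  rw [m_eq_indicator hfm]
  refine integral_mono ((integrable_const (1:ℝ)).indicator (show MeasurableSet {v | f v = 1} from hfm (measurableSet_singleton 1)))
    (gI_int hfm hf1 hx) fun v => ?_
  by_cases hv : f v = 1
  · have : Set.indicator {v | f v = 1} (fun _ => (1:ℝ)) v = 1 :=
      Set.indicator_of_mem (by exact hv) _
    rw [this, gI, hv]; simp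
  · rw [Set.indicator_of_notMem (by exact hv)]
    exact (gI_pos x v).le

private lemma L_tendsto [IsProbabilityMeasure μ] (hfm : Measurable f) (hf1 : ∀ v, 1 ≤ f v) :
    Tendsto (LI μ f) atTop (𝓝 ((μ {v | f v = 1}).toReal)) := by
  rw [m_eq_indicator hfm]
  refine tendsto_integral_filter_of_dominated_convergence (fun _ => (1:ℝ))
    (Eventually.of_forall fun x => (gI_meas hfm x).aestronglyMeasurable) ?_
    (integrable_const 1) ?_
  · filter_upwards [eventually_ge_atTop (0:ℝ)] with x hx
    exact ae_of_all _ fun v => by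
      rw [Real.norm_eq_abs, abs_of_pos (gI_pos x v)]; exact gI_le_one hf1 hx v
  · refine ae_of_all _ fun v => ?_
    by_cases hv : f v = 1
    · have h1 : Set.indicator {v | f v = 1} (fun _ => (1:ℝ)) v = 1 :=
        Set.indicator_of_mem (by exact hv) _
      rw [h1]
      have : (fun x => gI f x v) = fun _ => (1:ℝ) := by
        funext x; rw [gI, hv]; simp
      rw [this]; exact tendsto_const_nhds
    · rw [Set.indicator_of_notMem (by exact hv)]
      have h1 : 1 < f v := lt_of_le_of_ne (hf1 v) (Ne.symm hv)
      have h2 : Tendsto (fun x : ℝ => -(x * (f v - 1))) atTop atBot :=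
        tendsto_neg_atTop_atBot.comp (Tendsto.atTop_mul_const' (by linarith) tendsto_id)
      exact Real.tendsto_exp_atBot.comp h2



variable {μ : Measure ℝ} {f : ℝ → ℝ}

private lemma shift_tendsto [IsProbabilityMeasure μ] (hfm : Measurable f) (hf1 : ∀ v, 1 ≤ f v)
    (hpos : ∀ ε : ℝ, 0 < ε → 0 < μ {v | f v < 1 + ε})
    {x d : ℝ → ℝ} {D : ℝ} (hD : 0 ≤ D)
    (hx : Tendsto x atTop atTop)
    (hd : ∀ᶠ t in atTop, 0 ≤ d t ∧ d t ≤ D) :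
    Tendsto (fun t => LI μ f (x t + d t) / LI μ f (x t)) atTop (𝓝 1) := by
  refine tendsto_order.2 ⟨?_, ?_⟩
  · -- lower bounds
    intro c hc1
    rcases le_or_gt c 0 with hc0 | hc0
    · filter_upwards [hx.eventually_ge_atTop 0, hd] with t hx0 hdt
      exact lt_of_le_of_lt hc0
        (div_pos (LI_pos hfm hf1 (by linarith [hdt.1])) (LI_pos hfm hf1 hx0))
    · -- main case 0 < c < 1
      set c' : ℝ := (1 + c) / 2 with hc'def
      have hc'1 : c' < 1 := by rw [hc'def]; linarith
      have hcc' : c < c' := by rw [hc'def]; linarith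
      have hc'0 : 0 < c' := by rw [hc'def]; linarith
      have hlog : Real.log c' < 0 := Real.log_neg hc'0 hc'1
      set ε : ℝ := -Real.log c' / (D + 1) with hεdef
      have hεpos : 0 < ε := div_pos (neg_pos.mpr hlog) (by linarith)
      have hεD : ε * (D + 1) = -Real.log c' := div_mul_cancel₀ _ (by linarith : D + 1 ≠ 0)
      have hexpD : c' ≤ Real.exp (-(D * ε)) := by
        rw [← Real.exp_log hc'0]
        refine Real.exp_le_exp.mpr ?_
        nlinarith [hεpos.le]
      have hc2 := hpos (ε / 2) (by positivity)
      set c2 : ℝ := (μ {v | f v < 1 + ε / 2}).toReal with hc2def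
      have hc2pos : 0 < c2 := ENNReal.toReal_pos hc2.ne' (measure_ne_top μ _)
      have hsmall : Tendsto (fun t => Real.exp (-(x t * (ε / 2))) / c2) atTop (𝓝 0) := by
        have h1 : Tendsto (fun t => -(x t * (ε / 2))) atTop atBot :=
          tendsto_neg_atTop_atBot.comp (Tendsto.atTop_mul_const' (by positivity) hx)
        have h2 := (Real.tendsto_exp_atBot.comp h1).div_const c2
        simpa using h2
      have hgap : 0 < 1 - c / c' := by
        rw [sub_pos, div_lt_one hc'0]; exact hcc'
      filter_upwards [hx.eventually_ge_atTop 0, hd, hsmall.eventually_lt_const hgap]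
        with t hx0 hdt hsm
      have hLx : 0 < LI μ f (x t) := LI_pos hfm hf1 hx0
      have hLB := LB (μ := μ) (ε := ε/2) hfm hf1 (by positivity : (0:ℝ) < ε / 2) hx0
      have hINEQ := INEQ (μ := μ) hfm hf1 hεpos hx0 hdt.1
      -- E := exp (-(x t * ε))
      set E : ℝ := Real.exp (-(x t * ε)) with hEdef
      have e1 : E ≤ Real.exp (-(x t * (ε / 2))) / c2 * LI μ f (x t) := by
        have h2 : E = Real.exp (-(x t * (ε / 2))) * Real.exp (-(x t * (ε / 2))) := by
          rw [hEdef, ← Real.exp_add]; ring_nf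
        rw [h2, div_mul_eq_mul_div, le_div_iff₀ hc2pos]
        nlinarith [hLB, (Real.exp_pos (-(x t * (ε / 2)))).le]
      have h3 : E < (1 - c / c') * LI μ f (x t) :=
        lt_of_le_of_lt e1 (mul_lt_mul_of_pos_right hsm hLx)
      have hexpd' : c' ≤ Real.exp (-(d t * ε)) := by
        refine hexpD.trans (Real.exp_le_exp.mpr ?_)
        have := hdt.2
        nlinarith [hεpos.le]
      have h9 : 0 < c / c' * LI μ f (x t) := mul_pos (div_pos hc0 hc'0) hLx
      have hLxE : 0 ≤ LI μ f (x t) - E := by nlinarith [h3, h9]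
      have h4 : c' * (LI μ f (x t) - E) ≤ LI μ f (x t + d t) :=
        le_trans (mul_le_mul_of_nonneg_right hexpd' hLxE) hINEQ
      have h6 : c' * E < (c' - c) * LI μ f (x t) := by
        have h5 := mul_lt_mul_of_pos_left h3 hc'0
        have h7 : c' * ((1 - c / c') * LI μ f (x t)) = (c' - c) * LI μ f (x t) := by
          have hq : c' * (1 - c / c') = c' - c := by field_simp
          rw [← mul_assoc, hq]
        rw [h7] at h5
        exact h5
      rw [lt_div_iff₀ hLx]
      rw [mul_sub] at h4
      have h8 : (c' - c) * LI μ f (x t) = c' * LI μ f (x t) - c * LI μ f (x t) := by ring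
      linarith
  · intro c hc1
    filter_upwards [hx.eventually_ge_atTop 0, hd] with t hx0 hdt
    have hLx : 0 < LI μ f (x t) := LI_pos hfm hf1 hx0
    have hle : LI μ f (x t + d t) ≤ LI μ f (x t) := LI_anti hfm hf1 hx0 (by linarith [hdt.1])
    exact lt_of_le_of_lt ((div_le_one hLx).mpr hle) hc1



variable {μ : Measure ℝ} {f : ℝ → ℝ}

private lemma master (μ : Measure ℝ) [IsProbabilityMeasure μ]
    (f : ℝ → ℝ) (hfm : Measurable f) (hf1 : ∀ v, 1 ≤ f v)
    (hpos : ∀ ε : ℝ, 0 < ε → 0 < μ {v | f v < 1 + ε})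
    (b : ℝ) (hb : 0 < b) (q : ℝ → ℝ)
    (hq : ∀ t : ℝ, 1 ≤ t → 0 ≤ q t ∧ (∫ v, Real.exp (-(q t * f v)) ∂μ) = 1 / t) :
    ∃ l : ℝ → ℝ, ContinuousOn l (Set.Ici 1) ∧
      (∀ t : ℝ, 1 ≤ t → l t ∈ Set.Icc ((μ {v | f v = 1}).toReal) 1) ∧
      SlowlyVarying l ∧ (∀ t : ℝ, 1 ≤ t → q (t ^ b) = Real.log (t ^ b * l t)) ∧
      Tendsto l atTop (𝓝 ((μ {v | f v = 1}).toReal)) := by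
  have hqS : ∀ t : ℝ, 1 ≤ t → SI μ f (q t) = 1 / t := fun t ht => (hq t ht).2
  -- continuity of q on [1, ∞)
  have hqcont : ContinuousOn q (Set.Ici 1) := by
    intro t₀ ht₀
    rw [Set.mem_Ici] at ht₀
    have ht₀' : (0:ℝ) < t₀ := lt_of_lt_of_le one_pos ht₀
    have hinv : Tendsto (fun t : ℝ => 1 / t) (𝓝[Set.Ici 1] t₀) (𝓝 (1 / t₀)) :=
      (continuousWithinAt_const.div continuousWithinAt_id ht₀'.ne')
    have hq₀ : 0 ≤ q t₀ := (hq t₀ ht₀).1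
    show Tendsto q (𝓝[Set.Ici 1] t₀) (𝓝 (q t₀))
    refine tendsto_order.2 ⟨?_, ?_⟩
    · intro c hcq
      rcases le_or_gt (q t₀) 0 with h0 | h0
      · filter_upwards [self_mem_nhdsWithin] with t ht
        exact lt_of_lt_of_le (by linarith : c < 0) (hq t ht).1
      · have hc' : max c 0 < q t₀ := max_lt hcq h0
        have hSlt : 1 / t₀ < SI μ f (max c 0) := by
          rw [← hqS t₀ ht₀]
          exact SI_strict_anti hfm hf1 (le_max_right _ _) hc'
        filter_upwards [hinv.eventually_lt_const hSlt, self_mem_nhdsWithin] with t h1 h2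
        by_contra hle
        push_neg at hle
        have h3 : SI μ f (max c 0) ≤ SI μ f (q t) :=
          SI_anti hfm hf1 (hq t h2).1 (le_trans hle (le_max_left _ _))
        rw [hqS t h2] at h3
        linarith
    · intro c hcq
      have hSlt : SI μ f c < 1 / t₀ := by
        rw [← hqS t₀ ht₀]
        exact SI_strict_anti hfm hf1 hq₀ hcq
      filter_upwards [hinv.eventually_const_lt hSlt, self_mem_nhdsWithin] with t h1 h2
      by_contra hle
      push_neg at hle
      have h3 : SI μ f (q t) ≤ SI μ f c :=
        SI_anti hfm hf1 (by linarith) hle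
      rw [hqS t h2] at h3
      linarith
  -- q tends to infinity
  have hqtop : Tendsto q atTop atTop := by
    rw [tendsto_atTop]
    intro X
    have hX0 : (0:ℝ) ≤ max X 0 := le_max_right _ _
    have hSX : 0 < SI μ f (max X 0) := SI_pos hfm hf1 hX0
    filter_upwards [tendsto_inv_atTop_zero.eventually_lt_const hSX,
      eventually_ge_atTop (1:ℝ)] with t h1 ht
    by_contra h
    push_neg at h
    have h2 : SI μ f (max X 0) < SI μ f (q t) :=
      SI_strict_anti hfm hf1 (hq t ht).1 (lt_of_lt_of_le h (le_max_left _ _))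
    rw [hqS t ht, one_div] at h2
    linarith
  -- monotonicity of q
  have hqmono : ∀ t₁ t₂ : ℝ, 1 ≤ t₁ → t₁ ≤ t₂ → q t₁ ≤ q t₂ := by
    intro t₁ t₂ h1 h12
    by_contra h
    push_neg at h
    have h2 : SI μ f (q t₁) < SI μ f (q t₂) := SI_strict_anti hfm hf1 (hq t₂ (h1.trans h12)).1 h
    rw [hqS t₁ h1, hqS t₂ (h1.trans h12)] at h2
    have ht₁ : (0:ℝ) < t₁ := lt_of_lt_of_le one_pos h1
    have ht₂ : (0:ℝ) < t₂ := by linarith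
    rw [div_lt_div_iff₀ ht₁ ht₂] at h2
    linarith
  -- the slowly varying function
  set l : ℝ → ℝ := fun t => Real.exp (q (t ^ b)) / t ^ b with hldef
  have hrpow_pos : ∀ t : ℝ, 1 ≤ t → (0:ℝ) < t ^ b := fun t ht =>
    Real.rpow_pos_of_pos (lt_of_lt_of_le one_pos ht) b
  have hrpow_ge : ∀ t : ℝ, 1 ≤ t → (1:ℝ) ≤ t ^ b := fun t ht => Real.one_le_rpow ht hb.le
  have key : ∀ t : ℝ, 1 ≤ t → LI μ f (q (t ^ b)) = l t := by
    intro t ht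
    rw [hldef, LI_eq_exp_mul_SI, hqS _ (hrpow_ge t ht), mul_one_div]
  have hexp : ∀ s : ℝ, 1 ≤ s → Real.exp (q s) = s * LI μ f (q s) := by
    intro s hs
    rw [LI_eq_exp_mul_SI, hqS s hs]
    field_simp
  refine ⟨l, ?_, ?_, ⟨?_, ?_⟩, ?_, ?_⟩
  · -- continuity
    have hrc : ContinuousOn (fun t : ℝ => t ^ b) (Set.Ici 1) := fun t ht =>
      (Real.continuousAt_rpow_const t b (Or.inl (by
        rw [Set.mem_Ici] at ht; positivity))).continuousWithinAt
    have maps : Set.MapsTo (fun t : ℝ => t ^ b) (Set.Ici 1) (Set.Ici 1) := fun t ht =>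
      Set.mem_Ici.mpr (hrpow_ge t (Set.mem_Ici.mp ht))
    refine ContinuousOn.div ?_ hrc ?_
    · exact Real.continuous_exp.comp_continuousOn (hqcont.comp hrc maps)
    · intro t ht
      exact (hrpow_pos t (Set.mem_Ici.mp ht)).ne'
  · -- range in [m, 1]
    intro t ht
    have h1 : 1 ≤ t ^ b := hrpow_ge t ht
    have h0 : 0 ≤ q (t ^ b) := (hq _ h1).1
    rw [← key t ht]
    exact ⟨L_ge_m hfm hf1 h0, LI_le_one hfm hf1 h0⟩
  · -- eventual positivity
    filter_upwards [eventually_ge_atTop (1:ℝ)] with t ht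
    exact div_pos (Real.exp_pos _) (hrpow_pos t ht)
  · -- slow variation
    intro a ha
    rcases le_or_gt 1 a with ha1 | ha1
    · -- case a ≥ 1
      have hD : 0 ≤ b * Real.log a := mul_nonneg hb.le (Real.log_nonneg ha1)
      have hxt : Tendsto (fun t : ℝ => q (t ^ b)) atTop atTop :=
        hqtop.comp (tendsto_rpow_atTop hb)
      have hdt : ∀ᶠ t in atTop, 0 ≤ q ((a * t) ^ b) - q (t ^ b) ∧
          q ((a * t) ^ b) - q (t ^ b) ≤ b * Real.log a := by
        filter_upwards [eventually_ge_atTop (1:ℝ)] with t ht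
        have h1t : (0:ℝ) < t := lt_of_lt_of_le one_pos ht
        have h1at : 1 ≤ a * t := by nlinarith
        have htb : 1 ≤ t ^ b := hrpow_ge t ht
        have hatb : 1 ≤ (a * t) ^ b := hrpow_ge _ h1at
        have hmono : t ^ b ≤ (a * t) ^ b :=
          Real.rpow_le_rpow (by linarith) (by nlinarith) hb.le
        have hd0 : 0 ≤ q ((a * t) ^ b) - q (t ^ b) :=
          sub_nonneg.mpr (hqmono _ _ htb hmono)
        refine ⟨hd0, ?_⟩
        have hq0 : 0 ≤ q (t ^ b) := (hq _ htb).1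
        have hqa0 : 0 ≤ q ((a * t) ^ b) := (hq _ hatb).1
        have hLq : 0 < LI μ f (q (t ^ b)) := LI_pos hfm hf1 hq0
        have hLqa : 0 < LI μ f (q ((a * t) ^ b)) := LI_pos hfm hf1 hqa0
        have hLle : LI μ f (q ((a * t) ^ b)) ≤ LI μ f (q (t ^ b)) :=
          LI_anti hfm hf1 hq0 (hqmono _ _ htb hmono)
        have hab : (0:ℝ) < a ^ b := Real.rpow_pos_of_pos (by linarith) b
        have htbpos : (0:ℝ) < t ^ b := hrpow_pos t ht
        have hab2 : (a * t) ^ b = a ^ b * t ^ b :=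
          Real.mul_rpow (by linarith : (0:ℝ) ≤ a) (by linarith : (0:ℝ) ≤ t)
        have hd2 : Real.exp (q ((a * t) ^ b) - q (t ^ b)) ≤ a ^ b := by
          rw [Real.exp_sub, hexp _ hatb, hexp _ htb, div_le_iff₀ (mul_pos htbpos hLq)]
          calc (a * t) ^ b * LI μ f (q ((a * t) ^ b))
              = a ^ b * t ^ b * LI μ f (q ((a * t) ^ b)) := by rw [hab2]
            _ ≤ a ^ b * t ^ b * LI μ f (q (t ^ b)) := by
                refine mul_le_mul_of_nonneg_left hLle (by positivity)
            _ = a ^ b * (t ^ b * LI μ f (q (t ^ b))) := by ring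
        have := Real.log_le_log (Real.exp_pos _) hd2
        rw [Real.log_exp, Real.log_rpow (by linarith : (0:ℝ) < a)] at this
        exact this
      have hsh := shift_tendsto (μ := μ) hfm hf1 hpos hD hxt hdt
      refine hsh.congr' ?_
      filter_upwards [eventually_ge_atTop (1:ℝ)] with t ht
      have h1at : 1 ≤ a * t := by nlinarith [lt_of_lt_of_le one_pos ht]
      have heq : q (t ^ b) + (q ((a * t) ^ b) - q (t ^ b)) = q ((a * t) ^ b) := by ring
      rw [heq, key t ht, key _ h1at]
    · -- case a < 1
      have hainv : 1 ≤ a⁻¹ := (one_le_inv_iff₀.mpr ⟨ha, ha1.le⟩)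
      have hD : 0 ≤ b * Real.log a⁻¹ := mul_nonneg hb.le (Real.log_nonneg hainv)
      have hxt : Tendsto (fun t : ℝ => q ((a * t) ^ b)) atTop atTop :=
        hqtop.comp ((tendsto_rpow_atTop hb).comp (tendsto_id.const_mul_atTop ha))
      have hdt : ∀ᶠ t in atTop, 0 ≤ q (t ^ b) - q ((a * t) ^ b) ∧
          q (t ^ b) - q ((a * t) ^ b) ≤ b * Real.log a⁻¹ := by
        filter_upwards [eventually_ge_atTop (max 1 a⁻¹)] with t ht
        have ht1 : (1:ℝ) ≤ t := le_trans (le_max_left _ _) ht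
        have h1t : (0:ℝ) < t := lt_of_lt_of_le one_pos ht1
        have h1at : 1 ≤ a * t := by
          have : a⁻¹ ≤ t := le_trans (le_max_right _ _) ht
          calc (1:ℝ) = a * a⁻¹ := by field_simp
            _ ≤ a * t := by nlinarith
        have htb : 1 ≤ t ^ b := hrpow_ge t ht1
        have hatb : 1 ≤ (a * t) ^ b := hrpow_ge _ h1at
        have hmono : (a * t) ^ b ≤ t ^ b :=
          Real.rpow_le_rpow (by nlinarith) (by nlinarith) hb.le
        have hd0 : 0 ≤ q (t ^ b) - q ((a * t) ^ b) :=
          sub_nonneg.mpr (hqmono _ _ hatb hmono)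
        refine ⟨hd0, ?_⟩
        have hq0 : 0 ≤ q (t ^ b) := (hq _ htb).1
        have hqa0 : 0 ≤ q ((a * t) ^ b) := (hq _ hatb).1
        have hLle : LI μ f (q (t ^ b)) ≤ LI μ f (q ((a * t) ^ b)) :=
          LI_anti hfm hf1 hqa0 (hqmono _ _ hatb hmono)
        have hab : (0:ℝ) < a ^ b := Real.rpow_pos_of_pos ha b
        have hinvab : a⁻¹ ^ b = (a ^ b)⁻¹ := Real.inv_rpow ha.le b
        have htbpos : (0:ℝ) < t ^ b := hrpow_pos t ht1
        have hatbpos : (0:ℝ) < (a * t) ^ b := Real.rpow_pos_of_pos (by nlinarith) b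
        have hLqa : 0 < LI μ f (q ((a * t) ^ b)) := LI_pos hfm hf1 hqa0
        have hab2 : (a * t) ^ b = a ^ b * t ^ b :=
          Real.mul_rpow (by linarith : (0:ℝ) ≤ a) (by linarith : (0:ℝ) ≤ t)
        have hd2 : Real.exp (q (t ^ b) - q ((a * t) ^ b)) ≤ a⁻¹ ^ b := by
          rw [Real.exp_sub, hexp _ htb, hexp _ hatb, div_le_iff₀ (mul_pos hatbpos hLqa)]
          calc t ^ b * LI μ f (q (t ^ b)) ≤ t ^ b * LI μ f (q ((a * t) ^ b)) :=
              mul_le_mul_of_nonneg_left hLle htbpos.le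
            _ = a⁻¹ ^ b * ((a * t) ^ b * LI μ f (q ((a * t) ^ b))) := by
                rw [hinvab, hab2]
                field_simp
        have := Real.log_le_log (Real.exp_pos _) hd2
        rw [Real.log_exp, Real.log_rpow (by positivity : (0:ℝ) < a⁻¹)] at this
        exact this
      have hsh := shift_tendsto (μ := μ) hfm hf1 hpos hD hxt hdt
      have hsh' := hsh.inv₀ one_ne_zero
      rw [inv_one] at hsh'
      refine hsh'.congr' ?_
      filter_upwards [eventually_ge_atTop (max 1 a⁻¹)] with t ht
      have ht1 : (1:ℝ) ≤ t := le_trans (le_max_left _ _) ht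
      have h1at : 1 ≤ a * t := by
        have h2 : a⁻¹ ≤ t := le_trans (le_max_right _ _) ht
        calc (1:ℝ) = a * a⁻¹ := by field_simp
          _ ≤ a * t := by nlinarith
      have heq : q ((a * t) ^ b) + (q (t ^ b) - q ((a * t) ^ b)) = q (t ^ b) := by ring
      rw [heq, key t ht1, key _ h1at, inv_div]
  · -- log identity
    intro t ht
    have h1 : 1 ≤ t ^ b := hrpow_ge t ht
    have h2 : (0:ℝ) < t ^ b := hrpow_pos t ht
    rw [hldef]
    have h3 : t ^ b * (Real.exp (q (t ^ b)) / t ^ b) = Real.exp (q (t ^ b)) := by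
      field_simp
    rw [h3, Real.log_exp]
  · -- limit
    refine ((L_tendsto hfm hf1).comp (hqtop.comp (tendsto_rpow_atTop hb))).congr' ?_
    filter_upwards [eventually_ge_atTop (1:ℝ)] with t ht
    exact key t ht



variable {N : ℝ → ℝ → ℝ} {μ : Measure ℝ}

private lemma phi_cont (hN : IsNorm2 N) : Continuous (fun v : ℝ => N v (1 - v)) := by
  obtain ⟨hpos, hzero, hhom, htri⟩ := hN
  have lip : ∀ u w : ℝ, N u w ≤ |u| * N 1 0 + |w| * N 0 1 := by
    intro u w
    have h1 : N u w = N (u + 0) (0 + w) := by norm_num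
    have h2 : N (u + 0) (0 + w) ≤ N u 0 + N 0 w := htri u 0 0 w
    have h3 : N u 0 = |u| * N 1 0 := by
      have := hhom u 1 0; simpa using this
    have h4 : N 0 w = |w| * N 0 1 := by
      have := hhom w 0 1; simpa using this
    rw [h1]
    rw [h3, h4] at h2
    exact h2
  have key : ∀ v v' : ℝ, N v (1 - v) - N v' (1 - v') ≤ |v - v'| * (N 1 0 + N 0 1) := by
    intro v v'
    have h1 : N v (1 - v) ≤ N v' (1 - v') + N (v - v') (v' - v) := by
      have := htri v' (1 - v') (v - v') (v' - v)
      have e1 : v' + (v - v') = v := by ring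
      have e2 : 1 - v' + (v' - v) = 1 - v := by ring
      rw [e1, e2] at this
      exact this
    have h2 : N (v - v') (v' - v) ≤ |v - v'| * N 1 0 + |v' - v| * N 0 1 := lip _ _
    have h3 : |v' - v| = |v - v'| := abs_sub_comm _ _
    rw [h3] at h2
    nlinarith [h2, h1]
  have hK : 0 ≤ N 1 0 + N 0 1 := add_nonneg (hpos 1 0) (hpos 0 1)
  refine (LipschitzWith.of_dist_le_mul (K := (N 1 0 + N 0 1).toNNReal) ?_).continuous
  intro v v'
  rw [Real.dist_eq, Real.dist_eq, Real.coe_toNNReal _ hK]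
  rw [abs_sub_le_iff]
  constructor
  · calc N v (1 - v) - N v' (1 - v') ≤ |v - v'| * (N 1 0 + N 0 1) := key v v'
      _ = (N 1 0 + N 0 1) * |v - v'| := mul_comm _ _
  · calc N v' (1 - v') - N v (1 - v) ≤ |v' - v| * (N 1 0 + N 0 1) := key v' v
      _ = (N 1 0 + N 0 1) * |v - v'| := by rw [abs_sub_comm]; exact mul_comm _ _

private lemma tau_ge_one (hC2 : CondC2 N) {v : ℝ} (h0 : 0 < v) (h1 : v ≤ 1) : 1 ≤ tau N v := by
  rw [tau, le_div_iff₀ h0, one_mul]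
  calc v = |v| := (abs_of_pos h0).symm
    _ ≤ max |v| |1 - v| := le_max_left _ _
    _ ≤ N v (1 - v) := hC2 v (1 - v)

private lemma mem_omega0_iff (hC2 : CondC2 N) {v : ℝ} :
    v ∈ Omega0 N ↔ v ∈ Set.Icc (1/2 : ℝ) 1 ∧ N v (1 - v) = v := by
  constructor
  · rintro ⟨⟨hv0, hv1⟩, htau⟩
    have hvne : v ≠ 0 := by
      intro h
      rw [tau, h] at htau
      simp at htau
    have hv0' : 0 < v := lt_of_le_of_ne hv0 (Ne.symm hvne)
    have hNv : N v (1 - v) = v := by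
      rw [tau, div_eq_one_iff_eq hvne] at htau
      exact htau
    refine ⟨⟨?_, hv1⟩, hNv⟩
    have := hC2 v (1 - v)
    rw [hNv] at this
    have h2 : |1 - v| ≤ v := le_trans (le_max_right _ _) this
    rw [abs_of_nonneg (by linarith)] at h2
    linarith
  · rintro ⟨⟨hv2, hv1⟩, hNv⟩
    have hv0 : 0 < v := by linarith
    refine ⟨⟨by linarith, hv1⟩, ?_⟩
    rw [tau, hNv, div_self hv0.ne']

private lemma omega0_nonempty (hN : IsNorm2 N) (hC1 : CondC1 N) (hC3 : CondC3 N) :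
    (Omega0 N).Nonempty := by
  obtain ⟨hpos, hzero, hhom, htri⟩ := hN
  have key : ∀ x y : ℝ, 0 ≤ y → y < x → N x y = max x y → (Omega0 N).Nonempty := by
    intro x y hy hxy hNm
    have hx0 : 0 < x := lt_of_le_of_lt hy hxy
    have hs : 0 < x + y := by linarith
    refine ⟨x / (x + y), ⟨⟨by positivity, ?_⟩, ?_⟩⟩
    · rw [div_le_one hs]; linarith
    · have h1 : 1 - x / (x + y) = y / (x + y) := by field_simp; ring
      rw [tau, h1]
      have h2 : N (x / (x + y)) (y / (x + y)) = x / (x + y) := by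
        have h3 : x / (x + y) = (x + y)⁻¹ * x := by ring
        have h4 : y / (x + y) = (x + y)⁻¹ * y := by ring
        rw [h3, h4, hhom, abs_of_pos (by positivity : (0:ℝ) < (x + y)⁻¹), hNm,
          max_eq_left hxy.le]
      rw [h2, div_self (by positivity : x / (x + y) ≠ 0)]
  obtain ⟨x₀, y₀, hx₀, hy₀, hne, hmax⟩ := hC3
  rcases hne.lt_or_gt with h | h
  · refine key y₀ x₀ hx₀ h ?_
    rw [hC1 y₀ x₀, hmax, max_comm]
  · exact key x₀ y₀ hy₀ h hmax

private lemma omega0_convex (hN : IsNorm2 N) (hC2 : CondC2 N) : Convex ℝ (Omega0 N) := by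
  obtain ⟨hpos, hzero, hhom, htri⟩ := hN
  intro v₁ hv₁ v₂ hv₂ s r hs hr hsr
  obtain ⟨⟨hv₁2, hv₁1⟩, hN₁⟩ := (mem_omega0_iff hC2).mp hv₁
  obtain ⟨⟨hv₂2, hv₂1⟩, hN₂⟩ := (mem_omega0_iff hC2).mp hv₂
  simp only [smul_eq_mul]
  have hw2 : 1/2 ≤ s * v₁ + r * v₂ := by nlinarith
  have hw1 : s * v₁ + r * v₂ ≤ 1 := by nlinarith
  refine (mem_omega0_iff hC2).mpr ⟨⟨hw2, hw1⟩, ?_⟩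
  have hub : N (s * v₁ + r * v₂) (1 - (s * v₁ + r * v₂)) ≤ s * v₁ + r * v₂ := by
    have h1 : 1 - (s * v₁ + r * v₂) = s * (1 - v₁) + r * (1 - v₂) := by
      have : s + r = 1 := hsr
      nlinarith [this]
    rw [h1]
    calc N (s * v₁ + r * v₂) (s * (1 - v₁) + r * (1 - v₂))
        ≤ N (s * v₁) (s * (1 - v₁)) + N (r * v₂) (r * (1 - v₂)) := htri _ _ _ _
      _ = |s| * N v₁ (1 - v₁) + |r| * N v₂ (1 - v₂) := by rw [hhom, hhom]
      _ = s * v₁ + r * v₂ := by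
          rw [abs_of_nonneg hs, abs_of_nonneg hr, hN₁, hN₂]
  have hlb : s * v₁ + r * v₂ ≤ N (s * v₁ + r * v₂) (1 - (s * v₁ + r * v₂)) := by
    calc s * v₁ + r * v₂ = |s * v₁ + r * v₂| := (abs_of_nonneg (by nlinarith)).symm
      _ ≤ max |s * v₁ + r * v₂| |1 - (s * v₁ + r * v₂)| := le_max_left _ _
      _ ≤ N (s * v₁ + r * v₂) (1 - (s * v₁ + r * v₂)) := hC2 _ _
  linarith

private lemma omega0_closed (hN : IsNorm2 N) (hC2 : CondC2 N) : IsClosed (Omega0 N) := by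
  have heq : Omega0 N = Set.Icc (1/2 : ℝ) 1 ∩ {v | N v (1 - v) = v} := by
    ext v
    rw [mem_omega0_iff hC2]
    constructor
    · rintro ⟨h1, h2⟩; exact ⟨h1, h2⟩
    · rintro ⟨h1, h2⟩; exact ⟨h1, h2⟩
  rw [heq]
  exact isClosed_Icc.inter (isClosed_eq (phi_cont hN) continuous_id)



variable {N : ℝ → ℝ → ℝ} {μ : Measure ℝ}

private lemma Ioo_compl_null (hμ : GoodMeasure μ) : μ ((Set.Ioo (0:ℝ) 1)ᶜ) = 0 := by
  have hsub : (Set.Ioo (0:ℝ) 1)ᶜ ⊆ ((Set.Icc (0:ℝ) 1)ᶜ ∪ {0}) ∪ {1} := by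
    intro v hv
    simp only [Set.mem_compl_iff, Set.mem_Ioo, not_and_or, not_lt] at hv
    by_cases h : v ∈ Set.Icc (0:ℝ) 1
    · rcases hv with h1 | h2
      · exact Or.inl (Or.inr (Set.mem_singleton_iff.mpr (le_antisymm h1 h.1)))
      · exact Or.inr (Set.mem_singleton_iff.mpr (le_antisymm h.2 h2))
    · exact Or.inl (Or.inl h)
  exact measure_mono_null hsub
    (measure_union_null (measure_union_null hμ.1 (hμ.2.1 0)) (hμ.2.1 1))

private lemma ae_Ioo (hμ : GoodMeasure μ) : ∀ᵐ v ∂μ, v ∈ Set.Ioo (0:ℝ) 1 := by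
  rw [ae_iff]
  exact Ioo_compl_null hμ

private lemma fdist_Icc [IsProbabilityMeasure μ] (hat : ∀ x : ℝ, μ {x} = 0) {c d : ℝ}
    (hcd : c ≤ d) : (μ (Set.Icc c d)).toReal = Fdist μ d - Fdist μ c := by
  have h2 : μ (Set.Icc c d) = μ (Set.Ioc c d) := by
    refine le_antisymm ?_ (measure_mono Set.Ioc_subset_Icc_self)
    calc μ (Set.Icc c d) ≤ μ ({c} ∪ Set.Ioc c d) := measure_mono ?_
      _ ≤ μ {c} + μ (Set.Ioc c d) := measure_union_le _ _
      _ = μ (Set.Ioc c d) := by rw [hat c, zero_add]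
    intro x hx
    rcases eq_or_lt_of_le hx.1 with h | h
    · exact Or.inl (Set.mem_singleton_iff.mpr h.symm)
    · exact Or.inr ⟨h, hx.2⟩
  have h1 : μ (Set.Iic c) + μ (Set.Ioc c d) = μ (Set.Iic d) := by
    rw [← measure_union (Set.Iic_disjoint_Ioc le_rfl) measurableSet_Ioc,
      Set.Iic_union_Ioc_eq_Iic hcd]
  rw [h2, Fdist, Fdist, ← h1, ENNReal.toReal_add (measure_ne_top μ _) (measure_ne_top μ _)]
  ring



private lemma main (N : ℝ → ℝ → ℝ) (hN : IsNorm2 N) (hC1 : CondC1 N) (hC2 : CondC2 N)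
    (hC3 : CondC3 N) (μ : Measure ℝ) [IsProbabilityMeasure μ] (hμ : GoodMeasure μ)
    (β γ : ℝ) (hβ : 0 < β) (hγ : 0 < γ) (qA qB : ℝ → ℝ)
    (hqA : ∀ t : ℝ, 1 ≤ t → 0 ≤ qA t ∧ survA N μ 0 (qA t) = 1 / t)
    (hqB : ∀ t : ℝ, 1 ≤ t → 0 ≤ qB t ∧ survB N μ 0 (qB t) = 1 / t) :
    ∃ lA lB : ℝ → ℝ,
      ContinuousOn lA (Set.Ici 1) ∧ ContinuousOn lB (Set.Ici 1) ∧
      (∀ t : ℝ, 1 ≤ t → lA t ∈ Set.Icc (mPlus N μ) 1) ∧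
      (∀ t : ℝ, 1 ≤ t → lB t ∈ Set.Icc (mMinus N μ) 1) ∧
      SlowlyVarying lA ∧ SlowlyVarying lB ∧
      (∀ t : ℝ, 1 ≤ t → qA (t ^ β) = Real.log (t ^ β * lA t)) ∧
      (∀ t : ℝ, 1 ≤ t → qB (t ^ γ) = Real.log (t ^ γ * lB t)) ∧
      Tendsto lA atTop (nhds (mPlus N μ)) ∧
      Tendsto lB atTop (nhds (mMinus N μ)) := by
  classical
  -- structure of Omega0
  have hne : (Omega0 N).Nonempty := omega0_nonempty hN hC1 hC3
  have hsub : Omega0 N ⊆ Set.Icc (1/2 : ℝ) 1 := fun v hv => ((mem_omega0_iff hC2).mp hv).1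
  have hbddb : BddBelow (Omega0 N) := ⟨1/2, fun v hv => (hsub hv).1⟩
  have hbdda : BddAbove (Omega0 N) := ⟨1, fun v hv => (hsub hv).2⟩
  have hlo_mem : vlo N ∈ Omega0 N := (omega0_closed hN hC2).csInf_mem hne hbddb
  have hhi_mem : vhi N ∈ Omega0 N := (omega0_closed hN hC2).csSup_mem hne hbdda
  have hlohi : vlo N ≤ vhi N := csInf_le_csSup hne hbddb hbdda
  have homega : Omega0 N = Set.Icc (vlo N) (vhi N) := by
    refine Set.Subset.antisymm (fun v hv => ⟨csInf_le hbddb hv, le_csSup hbdda hv⟩) ?_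
    exact (omega0_convex hN hC2).ordConnected.out hlo_mem hhi_mem
  have hlo2 : (1/2 : ℝ) ≤ vlo N := (hsub hlo_mem).1
  have hhi1 : vhi N ≤ 1 := (hsub hhi_mem).2
  have hhi0 : (0:ℝ) < vhi N := by linarith
  have htauhi : tau N (vhi N) = 1 := hhi_mem.2
  have hIoo : μ ((Set.Ioo (0:ℝ) 1)ᶜ) = 0 := Ioo_compl_null hμ
  have htau_meas : Measurable (tau N) := (phi_cont hN).measurable.div measurable_id
  -- side A data
  have hfmA : Measurable fun v : ℝ => max (tau N v) 1 := htau_meas.max measurable_const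
  have hf1A : ∀ v : ℝ, 1 ≤ max (tau N v) 1 := fun v => le_max_right _ _
  have hmA : (μ {v | max (tau N v) 1 = 1}).toReal = mPlus N μ := by
    have hstep : {v | max (tau N v) 1 = 1} ∩ Set.Ioo 0 1
        = Set.Icc (vlo N) (vhi N) ∩ Set.Ioo 0 1 := by
      ext v
      simp only [Set.mem_inter_iff, Set.mem_setOf_eq]
      constructor
      · rintro ⟨h1, h2⟩
        refine ⟨?_, h2⟩
        have hle : tau N v ≤ 1 := max_eq_right_iff.mp h1
        have hge : 1 ≤ tau N v := tau_ge_one hC2 h2.1 h2.2.le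
        have hmem : v ∈ Omega0 N := ⟨⟨h2.1.le, h2.2.le⟩, le_antisymm hle hge⟩
        rw [homega] at hmem
        exact hmem
      · rintro ⟨h1, h2⟩
        refine ⟨?_, h2⟩
        have hmem : v ∈ Omega0 N := by rw [homega]; exact h1
        rw [max_eq_right_iff, hmem.2]
    have h1 : μ {v | max (tau N v) 1 = 1} = μ (Set.Icc (vlo N) (vhi N)) := by
      rw [← measure_inter_conull (μ := μ) hIoo, hstep, measure_inter_conull (μ := μ) hIoo]
    rw [h1, fdist_Icc hμ.2.1 hlohi, mPlus]
  have hposA : ∀ ε : ℝ, 0 < ε → 0 < μ {v | max (tau N v) 1 < 1 + ε} := by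
    intro ε hε
    have hcont : ContinuousAt (tau N) (vhi N) :=
      ((phi_cont hN).continuousAt).div continuousAt_id hhi0.ne'
    have h1 : Tendsto (tau N) (𝓝 (vhi N)) (𝓝 1) := by rw [← htauhi]; exact hcont
    have h2 : ∀ᶠ v in 𝓝 (vhi N), tau N v < 1 + ε := h1.eventually_lt_const (by linarith)
    obtain ⟨δ, hδ, hball⟩ := Metric.eventually_nhds_iff.mp h2
    have haa : max (vhi N - δ) 0 < vhi N := max_lt (by linarith) hhi0
    have hsub2 : Set.Ioo (max (vhi N - δ) 0) (vhi N) ⊆ {v | max (tau N v) 1 < 1 + ε} := by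
      intro v hv
      have hd : dist v (vhi N) < δ := by
        rw [Real.dist_eq, abs_lt]
        constructor
        · have h3 := hv.1
          have h4 : vhi N - δ ≤ max (vhi N - δ) 0 := le_max_left _ _
          linarith
        · linarith [hv.2, hδ]
      exact max_lt (hball hd) (by linarith)
    exact lt_of_lt_of_le (hμ.2.2 _ _ (le_max_right _ _) haa hhi1) (measure_mono hsub2)
  have hqA' : ∀ t : ℝ, 1 ≤ t →
      0 ≤ qA t ∧ (∫ v, Real.exp (-(qA t * max (tau N v) 1)) ∂μ) = 1 / t := by
    intro t ht
    refine ⟨(hqA t ht).1, ?_⟩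
    rw [← (hqA t ht).2]
    simp only [survA]
    refine integral_congr_ae ?_
    filter_upwards [ae_Ioo hμ] with v hv
    simp [gpTail, max_eq_left (tau_ge_one hC2 hv.1 hv.2.le)]
  -- side B data
  have hfmB : Measurable fun v : ℝ => max (tau N (1 - v)) 1 :=
    (htau_meas.comp (measurable_const.sub measurable_id)).max measurable_const
  have hf1B : ∀ v : ℝ, 1 ≤ max (tau N (1 - v)) 1 := fun v => le_max_right _ _
  have hmB : (μ {v | max (tau N (1 - v)) 1 = 1}).toReal = mMinus N μ := by
    have hstep : {v | max (tau N (1 - v)) 1 = 1} ∩ Set.Ioo 0 1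
        = Set.Icc (1 - vhi N) (1 - vlo N) ∩ Set.Ioo 0 1 := by
      ext v
      simp only [Set.mem_inter_iff, Set.mem_setOf_eq]
      constructor
      · rintro ⟨h1, h2⟩
        refine ⟨?_, h2⟩
        have h1v : (1 : ℝ) - v ∈ Set.Ioo (0:ℝ) 1 := ⟨by linarith [h2.2], by linarith [h2.1]⟩
        have hle : tau N (1 - v) ≤ 1 := max_eq_right_iff.mp h1
        have hge : 1 ≤ tau N (1 - v) := tau_ge_one hC2 h1v.1 h1v.2.le
        have hmem : (1 : ℝ) - v ∈ Omega0 N := ⟨⟨h1v.1.le, h1v.2.le⟩, le_antisymm hle hge⟩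
        rw [homega] at hmem
        exact ⟨by linarith [hmem.2], by linarith [hmem.1]⟩
      · rintro ⟨h1, h2⟩
        refine ⟨?_, h2⟩
        have hmem : (1 : ℝ) - v ∈ Omega0 N := by
          rw [homega]
          exact ⟨by linarith [h1.2], by linarith [h1.1]⟩
        rw [max_eq_right_iff, hmem.2]
    have h1 : μ {v | max (tau N (1 - v)) 1 = 1} = μ (Set.Icc (1 - vhi N) (1 - vlo N)) := by
      rw [← measure_inter_conull (μ := μ) hIoo, hstep, measure_inter_conull (μ := μ) hIoo]
    rw [h1, fdist_Icc hμ.2.1 (by linarith : 1 - vhi N ≤ 1 - vlo N), mMinus]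
  have hposB : ∀ ε : ℝ, 0 < ε → 0 < μ {v | max (tau N (1 - v)) 1 < 1 + ε} := by
    intro ε hε
    have hcont0 : ContinuousAt (tau N) (vhi N) :=
      ((phi_cont hN).continuousAt).div continuousAt_id hhi0.ne'
    have hcont : ContinuousAt (fun v : ℝ => tau N (1 - v)) (1 - vhi N) := by
      have h1 : ContinuousAt (fun v : ℝ => (1:ℝ) - v) (1 - vhi N) :=
        (continuous_const.sub continuous_id).continuousAt
      have h2 : ContinuousAt (tau N) ((fun v : ℝ => (1:ℝ) - v) (1 - vhi N)) := by
        simpa [show (1:ℝ) - (1 - vhi N) = vhi N by ring] using hcont0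
      exact h2.comp h1
    have h1 : Tendsto (fun v : ℝ => tau N (1 - v)) (𝓝 (1 - vhi N)) (𝓝 1) := by
      have h0 := hcont.tendsto
      simpa [show (1:ℝ) - (1 - vhi N) = vhi N by ring, htauhi] using h0
    have h2 : ∀ᶠ v in 𝓝 (1 - vhi N), tau N (1 - v) < 1 + ε :=
      h1.eventually_lt_const (by linarith)
    obtain ⟨δ, hδ, hball⟩ := Metric.eventually_nhds_iff.mp h2
    have hw1 : 1 - vhi N < 1 := by linarith
    have hbb : 1 - vhi N < min (1 - vhi N + δ) 1 := lt_min (by linarith) hw1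
    have hsub2 : Set.Ioo (1 - vhi N) (min (1 - vhi N + δ) 1)
        ⊆ {v | max (tau N (1 - v)) 1 < 1 + ε} := by
      intro v hv
      have hd : dist v (1 - vhi N) < δ := by
        rw [Real.dist_eq, abs_lt]
        have h3 := hv.2
        have h4 : min (1 - vhi N + δ) 1 ≤ 1 - vhi N + δ := min_le_left _ _
        constructor
        · linarith [hv.1]
        · linarith
      exact max_lt (hball hd) (by linarith)
    exact lt_of_lt_of_le
      (hμ.2.2 _ _ (by linarith : (0:ℝ) ≤ 1 - vhi N) hbb (min_le_right _ _))
      (measure_mono hsub2)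
  have hqB' : ∀ t : ℝ, 1 ≤ t →
      0 ≤ qB t ∧ (∫ v, Real.exp (-(qB t * max (tau N (1 - v)) 1)) ∂μ) = 1 / t := by
    intro t ht
    refine ⟨(hqB t ht).1, ?_⟩
    rw [← (hqB t ht).2]
    simp only [survB]
    refine integral_congr_ae ?_
    filter_upwards [ae_Ioo hμ] with v hv
    have h1v : (0:ℝ) < 1 - v := by linarith [hv.2]
    have h1v' : (1:ℝ) - v ≤ 1 := by linarith [hv.1]
    simp [gpTail, max_eq_left (tau_ge_one hC2 h1v h1v')]
  obtain ⟨lA, hA1, hA2, hA3, hA4, hA5⟩ :=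
    master μ (fun v => max (tau N v) 1) hfmA hf1A hposA β hβ qA hqA'
  obtain ⟨lB, hB1, hB2, hB3, hB4, hB5⟩ :=
    master μ (fun v => max (tau N (1 - v)) 1) hfmB hf1B hposB γ hγ qB hqB'
  refine ⟨lA, lB, hA1, hB1, ?_, ?_, hA3, hB3, hA4, hB4, ?_, ?_⟩
  · intro t ht
    rw [← hmA]
    exact hA2 t ht
  · intro t ht
    rw [← hmB]
    exact hB2 t ht
  · rw [← hmA]
    exact hA5
  · rw [← hmB]
    exact hB5

end Stmt4Aux

/-- Proposition 7: for `λ = 0` and `β, γ > 0`, there exist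
continuous slowly varying `l_A, l_B` on `[1,∞)` with values in `[m₊,1]` resp.
`[m₋,1]`, such that `q_A(t^β) = log(t^β l_A(t))`, `q_B(t^γ) = log(t^γ l_B(t))`
for all `t ≥ 1`, and `l_A(t) → m₊`, `l_B(t) → m₋`. -/
theorem stmt4 (N : ℝ → ℝ → ℝ) (hN : IsNorm2 N) (hC1 : CondC1 N) (hC2 : CondC2 N)
    (hC3 : CondC3 N) (μ : Measure ℝ) [IsProbabilityMeasure μ] (hμ : GoodMeasure μ)
    (β γ : ℝ) (hβ : 0 < β) (hγ : 0 < γ) (qA qB : ℝ → ℝ)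
    (hqA : ∀ t : ℝ, 1 ≤ t → 0 ≤ qA t ∧ survA N μ 0 (qA t) = 1 / t)
    (hqB : ∀ t : ℝ, 1 ≤ t → 0 ≤ qB t ∧ survB N μ 0 (qB t) = 1 / t) :
    ∃ lA lB : ℝ → ℝ,
      ContinuousOn lA (Set.Ici 1) ∧ ContinuousOn lB (Set.Ici 1) ∧
      (∀ t : ℝ, 1 ≤ t → lA t ∈ Set.Icc (mPlus N μ) 1) ∧
      (∀ t : ℝ, 1 ≤ t → lB t ∈ Set.Icc (mMinus N μ) 1) ∧
      SlowlyVarying lA ∧ SlowlyVarying lB ∧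
      (∀ t : ℝ, 1 ≤ t → qA (t ^ β) = Real.log (t ^ β * lA t)) ∧
      (∀ t : ℝ, 1 ≤ t → qB (t ^ γ) = Real.log (t ^ γ * lB t)) ∧
      Tendsto lA atTop (nhds (mPlus N μ)) ∧
      Tendsto lB atTop (nhds (mMinus N μ)) :=
  Stmt4Aux.main N hN hC1 hC2 hC3 μ hμ β γ hβ hγ qA qB hqA hqB
end
end

section
/- Let λ < 0 with ‖(1,1)‖_m = 1, set Λ = −1/λ, and let β, γ > 0. Then there exist slowly varying functions l_A, l_B on [1,∞) such that q_A(t^β) = Λ − t^{λβ} l_A(t) and q_B(t^γ) = Λ − t^{λγ} l_B(t) for all t ≥ 1. Furthermore l_A(t) → Λ m₊^λ and l_B(t) → Λ m₋^λ as t → ∞. -/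
open MeasureTheory Filter Set

noncomputable section

namespace Aux

variable {l : ℝ}

lemma gpTail_eq (hl : l ≠ 0) (z : ℝ) :
    gpTail l z = max (1 + l * z) 0 ^ (-1 / l) := if_neg hl

lemma gpTail_nonneg (hl : l ≠ 0) (z : ℝ) : 0 ≤ gpTail l z := by
  rw [gpTail_eq hl]
  exact Real.rpow_nonneg (le_max_right _ _) _

lemma hp_pos (hl : l < 0) : (0:ℝ) < -1 / l :=
  div_pos_of_neg_of_neg (by norm_num) hl

lemma gpTail_le_one (hl : l < 0) {z : ℝ} (hz : 0 ≤ z) : gpTail l z ≤ 1 := by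
  rw [gpTail_eq hl.ne]
  apply Real.rpow_le_one (le_max_right _ _) _ (hp_pos hl).le
  rw [max_le_iff]
  constructor
  · nlinarith
  · norm_num

lemma gpTail_anti (hl : l < 0) {z z' : ℝ} (h : z ≤ z') : gpTail l z' ≤ gpTail l z := by
  rw [gpTail_eq hl.ne, gpTail_eq hl.ne]
  apply Real.rpow_le_rpow (le_max_right _ _) _ (hp_pos hl).le
  apply max_le_max_right
  nlinarith

lemma gpTail_eq_zero (hl : l < 0) {z : ℝ} (hz : -1 / l ≤ z) : gpTail l z = 0 := by
  rw [gpTail_eq hl.ne]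
  have h1 : 1 + l * z ≤ 0 := by
    have : l * z ≤ l * (-1 / l) := by
      apply mul_le_mul_of_nonpos_left hz hl.le
    have h2 : l * (-1 / l) = -1 := by
      rw [mul_div_assoc', mul_div_cancel_left₀ _ hl.ne]
    linarith
  rw [max_eq_right h1, Real.zero_rpow (hp_pos hl).ne']

lemma gpTail_at (hl : l < 0) {ε : ℝ} (hε : 0 ≤ ε) :
    gpTail l (-1 / l * (1 - ε)) = ε ^ (-1 / l) := by
  rw [gpTail_eq hl.ne]
  have h2 : l * (-1 / l) = -1 := by
    rw [mul_div_assoc', mul_div_cancel_left₀ _ hl.ne]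
  have h1 : 1 + l * (-1 / l * (1 - ε)) = ε := by
    rw [← mul_assoc, h2]; ring
  rw [h1, max_eq_left hε]

lemma gpTail_cont (hl : l < 0) : Continuous (gpTail l) := by
  have : Continuous fun z : ℝ => max (1 + l * z) 0 ^ (-1 / l) := by
    apply Continuous.rpow_const
    · exact (continuous_const.add (continuous_const.mul continuous_id)).max continuous_const
    · exact fun z => Or.inr (hp_pos hl).le
  refine this.congr fun z => ?_
  rw [gpTail_eq hl.ne]

end Aux

namespace Aux

lemma core (μ : Measure ℝ) [IsProbabilityMeasure μ] (l : ℝ) (hl : l < 0)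
    (T : ℝ → ℝ) (hTm : Measurable T) (hT1 : ∀ᵐ v ∂μ, 1 ≤ T v)
    (m : ℝ) (hm : 0 < m) (hmeq : (μ {v | T v = 1}).toReal = m)
    (β : ℝ) (hβ : 0 < β) (q : ℝ → ℝ)
    (hq : ∀ t : ℝ, 1 ≤ t → 0 ≤ q t ∧ (∫ v, gpTail l (q t * T v) ∂μ) = 1 / t) :
    ∃ L : ℝ → ℝ, (∀ t, 1 ≤ t → 0 < L t) ∧ SlowlyVarying L ∧
      (∀ t, 1 ≤ t → q (t ^ β) = -1 / l - t ^ (l * β) * L t) ∧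
      Tendsto L atTop (nhds (-1 / l * m ^ l)) := by
  have hp := hp_pos hl
  have hEm : MeasurableSet {v | T v = 1} := hTm (measurableSet_singleton 1)
  -- measurability and integrability
  have hmeasx : ∀ x : ℝ, AEStronglyMeasurable (fun v => gpTail l (x * T v)) μ := fun x =>
    (((gpTail_cont hl).measurable).comp (hTm.const_mul x)).aestronglyMeasurable
  have hint : ∀ x : ℝ, 0 ≤ x → Integrable (fun v => gpTail l (x * T v)) μ := by
    intro x hx
    refine Integrable.mono' (integrable_const 1) (hmeasx x) ?_
    filter_upwards [hT1] with v hv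
    rw [Real.norm_eq_abs, abs_of_nonneg (gpTail_nonneg hl.ne _)]
    exact gpTail_le_one hl (mul_nonneg hx (by linarith))
  -- (K0)
  have hS0 : ∀ x : ℝ, -1 / l ≤ x → (∫ v, gpTail l (x * T v) ∂μ) = 0 := by
    intro x hx
    have h : (fun v => gpTail l (x * T v)) =ᵐ[μ] fun _ => 0 := by
      filter_upwards [hT1] with v hv
      exact gpTail_eq_zero hl (by nlinarith)
    rw [integral_congr_ae h, integral_zero]
  -- (K1)
  have hSmono : ∀ x x' : ℝ, 0 ≤ x → x ≤ x' →
      (∫ v, gpTail l (x' * T v) ∂μ) ≤ ∫ v, gpTail l (x * T v) ∂μ := by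
    intro x x' hx hxx'
    refine integral_mono_ae (hint x' (hx.trans hxx')) (hint x hx) ?_
    filter_upwards [hT1] with v hv
    exact gpTail_anti hl (by nlinarith)
  -- (K2)
  have hSlb : ∀ ε : ℝ, 0 < ε → ε ≤ 1 →
      m * ε ^ (-1 / l) ≤ ∫ v, gpTail l (-1 / l * (1 - ε) * T v) ∂μ := by
    intro ε hε hε1
    have h1 : m * ε ^ (-1 / l)
        = ∫ v, Set.indicator {v | T v = 1} (fun _ => ε ^ (-1 / l)) v ∂μ := by
      rw [integral_indicator_const _ hEm, measureReal_def, hmeq, smul_eq_mul, mul_comm]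
    rw [h1]
    refine integral_mono ((integrable_const _).indicator hEm)
      (hint _ (by nlinarith)) ?_
    intro v
    by_cases hv : T v = 1
    · rw [Set.indicator_of_mem (show v ∈ {v | T v = 1} from hv)]
      show ε ^ (-1 / l) ≤ gpTail l (-1 / l * (1 - ε) * T v)
      rw [hv, mul_one, gpTail_at hl hε.le]
    · rw [Set.indicator_of_notMem (show v ∉ {v | T v = 1} from hv)]
      exact gpTail_nonneg hl.ne _
  -- (K3) dominated convergence
  have hDCT : Tendsto
      (fun ε : ℝ => ∫ v, gpTail l (-1 / l * (1 - ε) * T v) / ε ^ (-1 / l) ∂μ)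
      (nhdsWithin 0 (Set.Ioc (0:ℝ) 1)) (nhds m) := by
    have hlim : Tendsto
        (fun ε : ℝ => ∫ v, gpTail l (-1 / l * (1 - ε) * T v) / ε ^ (-1 / l) ∂μ)
        (nhdsWithin 0 (Set.Ioc (0:ℝ) 1))
        (nhds (∫ v, Set.indicator {v | T v = 1} (fun _ => (1:ℝ)) v ∂μ)) := by
      refine tendsto_integral_filter_of_dominated_convergence (fun _ => (1:ℝ)) ?_ ?_
        (integrable_const 1) ?_
      · refine Filter.Eventually.of_forall fun ε => Measurable.aestronglyMeasurable ?_
        exact (((gpTail_cont hl).measurable).comp (hTm.const_mul _)).div measurable_const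
      · filter_upwards [self_mem_nhdsWithin] with ε hε
        filter_upwards [hT1] with v hv
        have hεp : (0:ℝ) < ε ^ (-1 / l) := Real.rpow_pos_of_pos hε.1 _
        rw [Real.norm_eq_abs,
          abs_of_nonneg (div_nonneg (gpTail_nonneg hl.ne _) hεp.le), div_le_one hεp]
        calc gpTail l (-1 / l * (1 - ε) * T v) ≤ gpTail l (-1 / l * (1 - ε)) := by
              apply gpTail_anti hl
              nlinarith [mul_nonneg (mul_nonneg hp.le (by linarith [hε.2] : (0:ℝ) ≤ 1 - ε))
                (by linarith : (0:ℝ) ≤ T v - 1)]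
          _ = ε ^ (-1 / l) := gpTail_at hl hε.1.le
      · filter_upwards [hT1] with v hv
        by_cases hv1 : T v = 1
        · rw [Set.indicator_of_mem (show v ∈ {v | T v = 1} from hv1)]
          refine tendsto_const_nhds.congr' ?_
          filter_upwards [self_mem_nhdsWithin] with ε hε
          rw [hv1, mul_one, gpTail_at hl hε.1.le,
            div_self (Real.rpow_pos_of_pos hε.1 _).ne']
        · rw [Set.indicator_of_notMem (show v ∉ {v | T v = 1} from hv1)]
          have hv2 : 1 < T v := lt_of_le_of_ne hv (Ne.symm hv1)
          have hc : (0:ℝ) < (T v - 1) / T v := div_pos (by linarith) (by linarith)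
          refine tendsto_const_nhds.congr' ?_
          have hmem : Set.Iio ((T v - 1) / T v) ∈ nhdsWithin (0:ℝ) (Set.Ioc 0 1) :=
            nhdsWithin_le_nhds (Iio_mem_nhds hc)
          filter_upwards [Filter.eventually_of_mem hmem fun ε hε => hε,
            self_mem_nhdsWithin] with ε hε hε'
          have h1 : ε * T v < T v - 1 := (lt_div_iff₀ (by linarith)).1 hε
          have h2 : (1:ℝ) ≤ (1 - ε) * T v := by nlinarith
          have h3 : -1 / l ≤ -1 / l * (1 - ε) * T v := by
            rw [mul_assoc]
            nlinarith [mul_le_mul_of_nonneg_left h2 hp.le]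
          rw [gpTail_eq_zero hl h3, zero_div]
    have : (∫ v, Set.indicator {v | T v = 1} (fun _ => (1:ℝ)) v ∂μ) = m := by
      rw [integral_indicator_const _ hEm, measureReal_def, hmeq, smul_eq_mul, mul_one]
    rwa [this] at hlim
  -- quantile analysis
  have hlne := hl.ne
  have htβ : ∀ t : ℝ, 1 ≤ t → 1 ≤ t ^ β := fun t ht => Real.one_le_rpow ht hβ.le
  have htβ0 : ∀ t : ℝ, 1 ≤ t → (0:ℝ) < t ^ β := fun t ht => lt_of_lt_of_le one_pos (htβ t ht)
  -- (Q1)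
  have hq1 : ∀ t : ℝ, 1 ≤ t → q (t ^ β) < -1 / l := by
    intro t ht
    by_contra h
    push_neg at h
    have h2 := (hq (t ^ β) (htβ t ht)).2
    rw [hS0 _ h] at h2
    have h3 : (0:ℝ) < 1 / t ^ β := by positivity
    rw [← h2] at h3
    exact lt_irrefl _ h3
  set ε : ℝ → ℝ := fun t => (-1 / l - q (t ^ β)) / (-1 / l) with hεdef
  set L : ℝ → ℝ := fun t => (-1 / l - q (t ^ β)) / t ^ (l * β) with hLdef
  have hε_mem : ∀ t : ℝ, 1 ≤ t → ε t ∈ Set.Ioc (0:ℝ) 1 := by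
    intro t ht
    constructor
    · exact div_pos (by linarith [hq1 t ht]) hp
    · rw [div_le_one hp]
      linarith [(hq (t ^ β) (htβ t ht)).1]
  -- (Q4) identity
  have hqε : ∀ t : ℝ, 1 ≤ t → q (t ^ β) = -1 / l * (1 - ε t) := by
    intro t ht
    show q (t ^ β) = -1 / l * (1 - (-1 / l - q (t ^ β)) / (-1 / l))
    field_simp
    ring
  -- (Q3) tendsto
  have hε0 : Tendsto ε atTop (nhdsWithin 0 (Set.Ioc (0:ℝ) 1)) := by
    rw [tendsto_nhdsWithin_iff]
    constructor
    · rw [tendsto_order]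
      constructor
      · intro a ha
        filter_upwards [eventually_ge_atTop (1:ℝ)] with t ht
        exact lt_trans ha (hε_mem t ht).1
      · intro a ha
        have hδ : (0:ℝ) < min a 1 := lt_min ha one_pos
        have hδ1 : min a 1 ≤ 1 := min_le_right _ _
        have hkey : ∀ᶠ t : ℝ in atTop, 1 / (m * (min a 1) ^ (-1 / l)) < t ^ β :=
          (tendsto_rpow_atTop hβ).eventually_gt_atTop _
        filter_upwards [hkey, eventually_ge_atTop (1:ℝ)] with t ht1 ht2
        by_contra hcon
        push_neg at hcon
        have hδε : min a 1 ≤ ε t := le_trans (min_le_left a 1) hcon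
        have hq_le : q (t ^ β) ≤ -1 / l * (1 - min a 1) := by
          rw [hqε t ht2]
          have := (hε_mem t ht2).2
          nlinarith
        have h2 := hSmono _ _ ((hq (t ^ β) (htβ t ht2)).1) hq_le
        have h3 := hSlb (min a 1) hδ hδ1
        rw [(hq (t ^ β) (htβ t ht2)).2] at h2
        have h4 : m * (min a 1) ^ (-1 / l) ≤ 1 / t ^ β := le_trans h3 h2
        have h5 : (0:ℝ) < m * (min a 1) ^ (-1 / l) :=
          mul_pos hm (Real.rpow_pos_of_pos hδ _)
        have h6 : t ^ β ≤ 1 / (m * (min a 1) ^ (-1 / l)) := by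
          rw [le_div_iff₀ h5, mul_comm]
          rw [le_div_iff₀ (htβ0 t ht2)] at h4
          linarith
        linarith
    · filter_upwards [eventually_ge_atTop (1:ℝ)] with t ht
      exact hε_mem t ht
  -- limit of the normalised integral along ε
  have hG : Tendsto (fun t => (1 / t ^ β) / ε t ^ (-1 / l)) atTop (nhds m) := by
    refine (hDCT.comp hε0).congr' ?_
    filter_upwards [eventually_ge_atTop (1:ℝ)] with t ht
    show (∫ v, gpTail l (-1 / l * (1 - ε t) * T v) / ε t ^ (-1 / l) ∂μ)
        = (1 / t ^ β) / ε t ^ (-1 / l)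
    rw [integral_div, ← hqε t ht, (hq (t ^ β) (htβ t ht)).2]
  -- limit of L
  have hLlim : Tendsto L atTop (nhds (-1 / l * m ^ l)) := by
    have hinv : ((-1 : ℝ) / l)⁻¹ = -l := by field_simp
    have hmain : Tendsto (fun t => -1 / l * ((1 / ((1 / t ^ β) / ε t ^ (-1 / l))) ^ (-l)))
        atTop (nhds (-1 / l * (1 / m) ^ (-l))) := by
      refine Tendsto.const_mul _ (Tendsto.rpow_const ?_ (Or.inr (by linarith)))
      exact (tendsto_const_nhds.div hG hm.ne')
    have hval : -1 / l * ((1:ℝ) / m) ^ (-l) = -1 / l * m ^ l := by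
      rw [one_div, Real.inv_rpow hm.le, ← Real.rpow_neg hm.le, neg_neg]
    rw [hval] at hmain
    refine hmain.congr' ?_
    filter_upwards [eventually_ge_atTop (1:ℝ)] with t ht
    have htpos : (0:ℝ) < t := lt_of_lt_of_le one_pos ht
    have hεt := hε_mem t ht
    have hεp : (0:ℝ) < ε t ^ (-1 / l) := Real.rpow_pos_of_pos hεt.1 _
    have h1 : (1:ℝ) / ((1 / t ^ β) / ε t ^ (-1 / l)) = ε t ^ (-1 / l) * t ^ β := by
      field_simp
    rw [h1]
    have h2 : (ε t ^ (-1 / l) * t ^ β) ^ (-l)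
        = (ε t ^ (-1 / l)) ^ (-l) * (t ^ β) ^ (-l) :=
      Real.mul_rpow hεp.le (htβ0 t ht).le
    have h3 : (ε t ^ (-1 / l)) ^ (-l) = ε t := by
      rw [← hinv]
      exact Real.rpow_rpow_inv hεt.1.le hp.ne'
    have h4 : (t ^ β) ^ (-l) = t ^ (-(l * β)) := by
      rw [← Real.rpow_mul htpos.le]
      ring_nf
    rw [h2, h3, h4]
    show -1 / l * (ε t * t ^ (-(l * β))) = (-1 / l - q (t ^ β)) / t ^ (l * β)
    rw [Real.rpow_neg htpos.le]
    have h5 : -1 / l * ε t = -1 / l - q (t ^ β) := by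
      show -1 / l * ((-1 / l - q (t ^ β)) / (-1 / l)) = -1 / l - q (t ^ β)
      rw [mul_comm, div_mul_cancel₀ _ hp.ne']
    rw [← mul_assoc, h5]
    ring
  -- assemble
  have hLpos : ∀ t : ℝ, 1 ≤ t → 0 < L t := by
    intro t ht
    exact div_pos (by linarith [hq1 t ht])
      (Real.rpow_pos_of_pos (lt_of_lt_of_le one_pos ht) _)
  have hc : (0:ℝ) < -1 / l * m ^ l := mul_pos hp (Real.rpow_pos_of_pos hm _)
  refine ⟨L, hLpos, ⟨?_, ?_⟩, ?_, hLlim⟩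
  · filter_upwards [eventually_ge_atTop (1:ℝ)] with t ht
    exact hLpos t ht
  · intro a ha
    have h1 : Tendsto (fun t => L (a * t)) atTop (nhds (-1 / l * m ^ l)) :=
      hLlim.comp (Tendsto.const_mul_atTop ha tendsto_id)
    have h2 := h1.div hLlim hc.ne'
    rwa [div_self hc.ne'] at h2
  · intro t ht
    have hne : (t:ℝ) ^ (l * β) ≠ 0 :=
      (Real.rpow_pos_of_pos (lt_of_lt_of_le one_pos ht) _).ne'
    show q (t ^ β) = -1 / l - t ^ (l * β) * ((-1 / l - q (t ^ β)) / t ^ (l * β))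
    field_simp
    ring

end Aux


namespace Aux2

lemma sandwich (μ : Measure ℝ) (hAtom : ∀ x : ℝ, μ {x} = 0) (E : Set ℝ) (a b : ℝ)
    (h1 : Set.Ioo a b ⊆ E) (h2 : E ⊆ Set.Icc a b) : μ E = μ (Set.Ioc a b) := by
  have hIcc : μ (Set.Icc a b) ≤ μ (Set.Ioo a b) := by
    have hsub : Set.Icc a b ⊆ Set.Ioo a b ∪ ({a} ∪ {b}) := by
      intro x hx
      rcases eq_or_lt_of_le hx.1 with h | h
      · exact Or.inr (Or.inl h.symm)
      · rcases eq_or_lt_of_le hx.2 with h' | h'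
        · exact Or.inr (Or.inr h')
        · exact Or.inl ⟨h, h'⟩
    calc μ (Set.Icc a b) ≤ μ (Set.Ioo a b ∪ ({a} ∪ {b})) := measure_mono hsub
      _ ≤ μ (Set.Ioo a b) + μ ({a} ∪ {b}) := measure_union_le _ _
      _ ≤ μ (Set.Ioo a b) + (μ {a} + μ {b}) := by
          gcongr
          exact measure_union_le _ _
      _ = μ (Set.Ioo a b) := by rw [hAtom, hAtom]; simp
  have hIoc1 : μ (Set.Ioc a b) ≤ μ (Set.Ioo a b) := by
    have hsub : Set.Ioc a b ⊆ Set.Ioo a b ∪ {b} := by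
      intro x hx
      rcases eq_or_lt_of_le hx.2 with h | h
      · exact Or.inr h
      · exact Or.inl ⟨hx.1, h⟩
    calc μ (Set.Ioc a b) ≤ μ (Set.Ioo a b ∪ {b}) := measure_mono hsub
      _ ≤ μ (Set.Ioo a b) + μ {b} := measure_union_le _ _
      _ = μ (Set.Ioo a b) := by rw [hAtom]; simp
  have e1 : μ E = μ (Set.Ioo a b) :=
    le_antisymm (le_trans (measure_mono h2) hIcc) (measure_mono h1)
  have e2 : μ (Set.Ioc a b) = μ (Set.Ioo a b) :=
    le_antisymm hIoc1 (measure_mono Set.Ioo_subset_Ioc_self)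
  rw [e1, e2]

lemma Ioc_toReal (μ : Measure ℝ) [IsProbabilityMeasure μ] {a b : ℝ} (hab : a ≤ b) :
    (μ (Set.Ioc a b)).toReal = Fdist μ b - Fdist μ a := by
  have hu := measure_union (μ := μ) (Set.Iic_disjoint_Ioc (le_refl a))
    (measurableSet_Ioc (a := a) (b := b))
  rw [Set.Iic_union_Ioc_eq_Iic hab] at hu
  unfold Fdist
  rw [hu, ENNReal.toReal_add (measure_ne_top μ _) (measure_ne_top μ _)]
  ring

end Aux2

/-- Proposition 9: for `λ < 0` with `‖(1,1)‖_m = 1`,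
`Λ = −1/λ`, and `β, γ > 0`, there exist slowly varying `l_A, l_B` on `[1,∞)`
with `q_A(t^β) = Λ − t^{λβ} l_A(t)`, `q_B(t^γ) = Λ − t^{λγ} l_B(t)` for all
`t ≥ 1`, and `l_A(t) → Λ m₊^λ`, `l_B(t) → Λ m₋^λ` as `t → ∞`. -/
theorem stmt7 (N : ℝ → ℝ → ℝ) (hN : IsNorm2 N) (hC1 : CondC1 N) (hC2 : CondC2 N)
    (hC3 : CondC3 N) (μ : Measure ℝ) [IsProbabilityMeasure μ] (hμ : GoodMeasure μ)
    (l β γ : ℝ) (hl : l < 0) (hN11 : N 1 1 = 1) (hβ : 0 < β) (hγ : 0 < γ)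
    (qA qB : ℝ → ℝ)
    (hqA : ∀ t : ℝ, 1 ≤ t → 0 ≤ qA t ∧ survA N μ l (qA t) = 1 / t)
    (hqB : ∀ t : ℝ, 1 ≤ t → 0 ≤ qB t ∧ survB N μ l (qB t) = 1 / t) :
    ∃ lA lB : ℝ → ℝ,
      (∀ t : ℝ, 1 ≤ t → 0 < lA t) ∧ (∀ t : ℝ, 1 ≤ t → 0 < lB t) ∧
      SlowlyVarying lA ∧ SlowlyVarying lB ∧
      (∀ t : ℝ, 1 ≤ t → qA (t ^ β) = -1 / l - t ^ (l * β) * lA t) ∧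
      (∀ t : ℝ, 1 ≤ t → qB (t ^ γ) = -1 / l - t ^ (l * γ) * lB t) ∧
      Tendsto lA atTop (nhds (-1 / l * mPlus N μ ^ l)) ∧
      Tendsto lB atTop (nhds (-1 / l * mMinus N μ ^ l)) := by
  obtain ⟨hnn, hzero, hhom, hadd⟩ := hN
  obtain ⟨hcompl, hAtom, hIval⟩ := hμ
  -- continuity of v ↦ N v (1 - v)
  have hgcont : Continuous (fun v : ℝ => N v (1 - v)) := by
    have key : ∀ v w : ℝ, N v (1 - v) - N w (1 - w) ≤ |v - w| * N 1 (-1) := by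
      intro v w
      have h2 := hadd w (1 - w) (v - w) (w - v)
      have h3 : N (v - w) (w - v) = |v - w| * N 1 (-1) := by
        have h := hhom (v - w) 1 (-1)
        rw [mul_one, mul_neg_one] at h
        rw [← h]
        congr 1
        ring
      have h4 : w + (v - w) = v := by ring
      have h5 : 1 - w + (w - v) = 1 - v := by ring
      rw [h4, h5, h3] at h2
      linarith
    rw [Metric.continuous_iff]
    intro v δ hδ
    have hK0 : 0 ≤ N 1 (-1) := hnn 1 (-1)
    refine ⟨δ / (N 1 (-1) + 1), by positivity, fun w hw => ?_⟩
    rw [Real.dist_eq] at hw ⊢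
    have k1 := key w v
    have k2 := key v w
    rw [abs_sub_comm v w] at k2
    have habs : |N w (1 - w) - N v (1 - v)| ≤ |w - v| * N 1 (-1) :=
      abs_le.2 ⟨by linarith, by linarith⟩
    have h6 : |w - v| * N 1 (-1) ≤ (δ / (N 1 (-1) + 1)) * N 1 (-1) :=
      mul_le_mul_of_nonneg_right hw.le hK0
    have h7 : (δ / (N 1 (-1) + 1)) * N 1 (-1) < δ := by
      rw [div_mul_eq_mul_div, div_lt_iff₀ (by positivity)]
      nlinarith
    linarith
  have htauMeas : Measurable (tau N) := hgcont.measurable.div measurable_id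
  have htau_ge : ∀ v : ℝ, 0 < v → 1 ≤ tau N v := by
    intro v hv
    unfold tau
    rw [le_div_iff₀ hv]
    calc 1 * v = |v| := by rw [one_mul, abs_of_pos hv]
      _ ≤ max |v| |1 - v| := le_max_left _ _
      _ ≤ N v (1 - v) := hC2 v (1 - v)
  have htau0 : tau N 0 = 0 := by unfold tau; exact div_zero _
  have hNval : ∀ c : ℝ, c ∈ Omega0 N → 0 < c ∧ N c (1 - c) = c := by
    rintro c ⟨⟨hc0, hc1⟩, hτ⟩
    have hcpos : 0 < c := by
      rcases eq_or_lt_of_le hc0 with h | h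
      · exfalso
        rw [← h, htau0] at hτ
        norm_num at hτ
      · exact h
    refine ⟨hcpos, ?_⟩
    exact (div_eq_one_iff_eq hcpos.ne').1 hτ
  have hsub : Omega0 N ⊆ Set.Icc (1/2 : ℝ) 1 := by
    intro v hv
    obtain ⟨hvpos, hNv⟩ := hNval v hv
    have h3 : |1 - v| ≤ v := by
      calc |1 - v| ≤ max |v| |1 - v| := le_max_right _ _
        _ ≤ N v (1 - v) := hC2 v (1 - v)
        _ = v := hNv
    have h4 := abs_le.1 h3
    exact ⟨by linarith [h4.2], hv.1.2⟩
  have hhalf : (1/2 : ℝ) ∈ Omega0 N := by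
    refine ⟨⟨by norm_num, by norm_num⟩, ?_⟩
    have h1 : N (1/2 : ℝ) (1/2) = 1/2 := by
      have h := hhom (1/2 : ℝ) 1 1
      rw [mul_one, hN11, mul_one] at h
      rw [h, abs_of_pos] <;> norm_num
    show N (1/2 : ℝ) (1 - 1/2) / (1/2) = 1
    norm_num [show (1:ℝ) - 1/2 = 1/2 by norm_num, h1]
  have hconv : ∀ a ∈ Omega0 N, ∀ b ∈ Omega0 N, ∀ v : ℝ, a ≤ v → v ≤ b → v ∈ Omega0 N := by
    intro a ha b hb v hav hvb
    have ha' := hsub ha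
    have hb' := hsub hb
    have hv2 : (1/2 : ℝ) ≤ v := le_trans ha'.1 hav
    have hv1 : v ≤ 1 := le_trans hvb hb'.2
    rcases eq_or_lt_of_le (hav.trans hvb) with heq | hlt
    · have : v = a := le_antisymm (heq ▸ hvb) hav
      exact this ▸ ha
    · have hba : 0 < b - a := by linarith
      set s := (b - v) / (b - a) with hs
      have hs0 : 0 ≤ s := div_nonneg (by linarith) hba.le
      have hs1 : s ≤ 1 := by
        rw [hs, div_le_one hba]
        linarith
      have hvrep : s * a + (1 - s) * b = v := by
        rw [hs]
        field_simp
        ring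
      have h4 := hadd (s * a) (s * (1 - a)) ((1 - s) * b) ((1 - s) * (1 - b))
      have h5 : N (s * a) (s * (1 - a)) = s * N a (1 - a) := by
        rw [hhom s a (1 - a), abs_of_nonneg hs0]
      have h6 : N ((1 - s) * b) ((1 - s) * (1 - b)) = (1 - s) * N b (1 - b) := by
        rw [hhom (1 - s) b (1 - b), abs_of_nonneg (by linarith)]
      have harg2 : s * (1 - a) + (1 - s) * (1 - b) = 1 - v := by
        rw [← hvrep]
        ring
      have hle : N v (1 - v) ≤ v := by
        calc N v (1 - v) = N (s * a + (1 - s) * b) (s * (1 - a) + (1 - s) * (1 - b)) := by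
              rw [hvrep, harg2]
          _ ≤ N (s * a) (s * (1 - a)) + N ((1 - s) * b) ((1 - s) * (1 - b)) := h4
          _ = s * a + (1 - s) * b := by
              rw [h5, h6, (hNval a ha).2, (hNval b hb).2]
          _ = v := hvrep
      have hge : v ≤ N v (1 - v) := by
        calc v = |v| := (abs_of_pos (by linarith)).symm
          _ ≤ max |v| |1 - v| := le_max_left _ _
          _ ≤ N v (1 - v) := hC2 v (1 - v)
      refine ⟨⟨by linarith, hv1⟩, ?_⟩
      unfold tau
      rw [le_antisymm hle hge]
      exact div_self (by linarith)
  -- witness from C3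
  have hwit : ∃ w ∈ Omega0 N, 1/2 < w := by
    have main : ∀ a b : ℝ, 0 ≤ b → b < a → N a b = a → ∃ w ∈ Omega0 N, 1/2 < w := by
      intro a b hb hba hNab
      have ha : 0 < a := lt_of_le_of_lt hb hba
      have hs : 0 < a + b := by linarith
      refine ⟨a / (a + b), ⟨⟨by positivity, by rw [div_le_one hs]; linarith⟩, ?_⟩, ?_⟩
      · unfold tau
        have h1 : 1 - a / (a + b) = b / (a + b) := by field_simp; ring
        rw [h1]
        have h2 : N (a / (a + b)) (b / (a + b)) = |1 / (a + b)| * N a b := by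
          rw [← hhom (1 / (a + b)) a b]
          congr 1 <;> field_simp
        rw [h2, hNab, abs_of_pos (by positivity)]
        field_simp
      · rw [lt_div_iff₀ hs]
        linarith
    obtain ⟨x₀, y₀, hx0, hy0, hne, hmax⟩ := hC3
    rcases lt_or_gt_of_ne hne with h | h
    · refine main y₀ x₀ hx0 h ?_
      rw [← hC1 x₀ y₀, hmax, max_eq_right h.le]
    · refine main x₀ y₀ hy0 h ?_
      rw [hmax, max_eq_left h.le]
  -- vlo / vhi facts
  have hne2 : (Omega0 N).Nonempty := ⟨1/2, hhalf⟩
  have hbdd : BddAbove (Omega0 N) := ⟨1, fun v hv => (hsub hv).2⟩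
  have hbddb : BddBelow (Omega0 N) := ⟨1/2, fun v hv => (hsub hv).1⟩
  have hvlo_le : vlo N ≤ 1/2 := csInf_le hbddb hhalf
  have hvlo_ge : (0:ℝ) ≤ vlo N := by
    have := le_csInf hne2 fun v hv => (hsub hv).1
    unfold vlo
    linarith
  have hvhi_le : vhi N ≤ 1 := csSup_le hne2 fun v hv => (hsub hv).2
  obtain ⟨w, hwmem, hwgt⟩ := hwit
  have hvhi_gt : 1/2 < vhi N := lt_of_lt_of_le hwgt (le_csSup hbdd hwmem)
  have hlohi : vlo N < vhi N := lt_of_le_of_lt hvlo_le hvhi_gt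
  have hIoo_sub : Set.Ioo (vlo N) (vhi N) ⊆ Omega0 N := by
    intro v hv
    obtain ⟨a, ha, hav⟩ := exists_lt_of_csInf_lt hne2 hv.1
    obtain ⟨b, hb, hvb⟩ := exists_lt_of_lt_csSup hne2 hv.2
    exact hconv a ha b hb v hav.le hvb.le
  have hIcc_sup : Omega0 N ⊆ Set.Icc (vlo N) (vhi N) :=
    fun v hv => ⟨csInf_le hbddb hv, le_csSup hbdd hv⟩
  -- null complements
  have h0A : μ ((Set.Ioc (0:ℝ) 1)ᶜ) = 0 := by
    refine measure_mono_null ?_ (measure_union_null hcompl (hAtom 0))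
    intro x hx
    by_cases h : x = 0
    · exact Or.inr h
    · left
      intro hcc
      exact hx ⟨lt_of_le_of_ne hcc.1 (Ne.symm h), hcc.2⟩
  have h0B : μ ((Set.Ico (0:ℝ) 1)ᶜ) = 0 := by
    refine measure_mono_null ?_ (measure_union_null hcompl (hAtom 1))
    intro x hx
    by_cases h : x = 1
    · exact Or.inr h
    · left
      intro hcc
      exact hx ⟨hcc.1, lt_of_le_of_ne hcc.2 h⟩
  -- a.e. lower bounds on tau
  have haeA : ∀ᵐ v ∂μ, 1 ≤ tau N v := by
    have hae : ∀ᵐ v ∂μ, v ∈ Set.Ioc (0:ℝ) 1 := by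
      rw [MeasureTheory.ae_iff]
      exact h0A
    filter_upwards [hae] with v hv
    exact htau_ge v hv.1
  have haeB : ∀ᵐ v ∂μ, 1 ≤ tau N (1 - v) := by
    have hae : ∀ᵐ v ∂μ, v ∈ Set.Ico (0:ℝ) 1 := by
      rw [MeasureTheory.ae_iff]
      exact h0B
    filter_upwards [hae] with v hv
    exact htau_ge (1 - v) (by linarith [hv.2])
  -- measure of the level sets
  have hEA_eq : {v : ℝ | tau N v = 1} ∩ Set.Ioc 0 1 = Omega0 N := by
    ext v
    constructor
    · rintro ⟨hτ, hv⟩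
      exact ⟨⟨hv.1.le, hv.2⟩, hτ⟩
    · rintro ⟨⟨hv0, hv1⟩, hτ⟩
      refine ⟨hτ, ?_, hv1⟩
      rcases eq_or_lt_of_le hv0 with h | h
      · exfalso
        rw [← h, htau0] at hτ
        norm_num at hτ
      · exact h
  have hmuA : μ {v : ℝ | tau N v = 1} = μ (Set.Ioc (vlo N) (vhi N)) := by
    rw [← measure_inter_conull h0A, hEA_eq]
    exact Aux2.sandwich μ hAtom _ _ _ hIoo_sub hIcc_sup
  have hmA_eq : (μ {v : ℝ | tau N v = 1}).toReal = mPlus N μ := by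
    rw [hmuA, Aux2.Ioc_toReal μ hlohi.le]
    rfl
  have hmA_pos : 0 < mPlus N μ := by
    rw [← hmA_eq, hmuA]
    refine ENNReal.toReal_pos ?_ (measure_ne_top μ _)
    exact (lt_of_lt_of_le (hIval _ _ hvlo_ge hlohi hvhi_le)
      (measure_mono Set.Ioo_subset_Ioc_self)).ne'
  have hB1 : Set.Ioo (1 - vhi N) (1 - vlo N) ⊆ {v : ℝ | tau N (1 - v) = 1} ∩ Set.Ico 0 1 := by
    intro v hv
    have h1 : (1 - v) ∈ Set.Ioo (vlo N) (vhi N) := ⟨by linarith [hv.2], by linarith [hv.1]⟩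
    have h2 := hIoo_sub h1
    exact ⟨h2.2, ⟨by linarith [hv.1], by linarith [hv.2]⟩⟩
  have hB2 : {v : ℝ | tau N (1 - v) = 1} ∩ Set.Ico 0 1 ⊆ Set.Icc (1 - vhi N) (1 - vlo N) := by
    rintro v ⟨hτ, hv0, hv1⟩
    have h1 : (1 - v) ∈ Omega0 N := ⟨⟨by linarith, by linarith⟩, hτ⟩
    have h2 := hIcc_sup h1
    exact ⟨by linarith [h2.2], by linarith [h2.1]⟩
  have hmuB : μ {v : ℝ | tau N (1 - v) = 1} = μ (Set.Ioc (1 - vhi N) (1 - vlo N)) := by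
    rw [← measure_inter_conull h0B]
    exact Aux2.sandwich μ hAtom _ _ _ hB1 hB2
  have hmB_eq : (μ {v : ℝ | tau N (1 - v) = 1}).toReal = mMinus N μ := by
    rw [hmuB, Aux2.Ioc_toReal μ (by linarith : 1 - vhi N ≤ 1 - vlo N)]
    rfl
  have hmB_pos : 0 < mMinus N μ := by
    rw [← hmB_eq, hmuB]
    refine ENNReal.toReal_pos ?_ (measure_ne_top μ _)
    exact (lt_of_lt_of_le (hIval _ _ (by linarith) (by linarith) (by linarith))
      (measure_mono Set.Ioo_subset_Ioc_self)).ne'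
  -- apply the core lemma twice
  obtain ⟨lA, hA1, hA2, hA3, hA4⟩ :=
    Aux.core μ l hl (tau N) htauMeas haeA (mPlus N μ) hmA_pos hmA_eq β hβ qA hqA
  obtain ⟨lB, hB1', hB2', hB3', hB4'⟩ :=
    Aux.core μ l hl (fun v => tau N (1 - v))
      (htauMeas.comp (measurable_const.sub measurable_id)) haeB
      (mMinus N μ) hmB_pos hmB_eq γ hγ qB hqB
  exact ⟨lA, lB, hA1, hB1', hA2, hB2', hA3, hB3', hA4, hB4'⟩
end
end
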